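/- arXiv:1310.2447 — 6 statements merged into one kernel-verified Lean document; each statement's English description precedes it below -/
import Mathlib

section
/- Let I be an open interval of ℝ, let t ≥ 2, and let f₁, …, f_t : I → ℝ be real analytic functions which are linearly independent over ℝ on I. For 1 ≤ i ≤ t, let W_i : I → ℝ denote the Wronskian of f₁, …, f_i. Assume that each W_j (1 ≤ j ≤ t) has finitely many zeros in I. Then f₁ + ⋯ + f_t has finitely many zeros in I and Z(f₁ + ⋯ + f_t) ≤ t − 1 + Z(W_t) + Z(W_{t−1}) + 2·∑_{j=1}^{t−2} Z(W_j), where Z(g) denotes the number of distinct zeros of g in I. -/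
open Matrix Polynomial Filter Topology

namespace KPTAux

def keepEmb (n : ℕ) (a : Fin 2) : Fin n ⊕ Fin 1 → Fin n ⊕ Fin 2 :=
  Sum.map id (fun _ => a)

lemma minor_det {n : ℕ} (M : Matrix (Fin n ⊕ Fin 2) (Fin n ⊕ Fin 2) ℝ)
    [Invertible M.toBlocks₁₁] (a b : Fin 2) :
    (M.submatrix (keepEmb n a) (keepEmb n b)).det =
      M.toBlocks₁₁.det *
        (M.toBlocks₂₂ - M.toBlocks₂₁ * ⅟M.toBlocks₁₁ * M.toBlocks₁₂) a b := by
  have hM : M.submatrix (keepEmb n a) (keepEmb n b) =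
      fromBlocks M.toBlocks₁₁
        (Matrix.of fun i (_ : Fin 1) => M (Sum.inl i) (Sum.inr b))
        (Matrix.of fun (_ : Fin 1) j => M (Sum.inr a) (Sum.inl j))
        (Matrix.of fun (_ : Fin 1) (_ : Fin 1) => M (Sum.inr a) (Sum.inr b)) := by
    ext i j
    cases i <;> cases j <;> simp [keepEmb, toBlocks₁₁]
  rw [hM, det_fromBlocks₁₁]
  congr 1
  rw [show (⅟M.toBlocks₁₁ : Matrix (Fin n) (Fin n) ℝ) = ⅟M.toBlocks₁₁ from rfl]
  have : ∀ (P : Matrix (Fin 1) (Fin 1) ℝ), P.det = P 0 0 := fun P => Matrix.det_fin_one P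
  rw [this]
  simp [Matrix.mul_apply, Matrix.sub_apply, toBlocks₂₂, toBlocks₂₁, toBlocks₁₂]

lemma desnanot_sum_inv {n : ℕ} (M : Matrix (Fin n ⊕ Fin 2) (Fin n ⊕ Fin 2) ℝ)
    [Invertible M.toBlocks₁₁] :
    M.det * (M.submatrix Sum.inl Sum.inl).det =
      (M.submatrix (keepEmb n 0) (keepEmb n 0)).det *
          (M.submatrix (keepEmb n 1) (keepEmb n 1)).det -
        (M.submatrix (keepEmb n 0) (keepEmb n 1)).det *
          (M.submatrix (keepEmb n 1) (keepEmb n 0)).det := by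
  have hcore : M.submatrix Sum.inl Sum.inl = M.toBlocks₁₁ := rfl
  have hdet : M.det = M.toBlocks₁₁.det *
      (M.toBlocks₂₂ - M.toBlocks₂₁ * ⅟M.toBlocks₁₁ * M.toBlocks₁₂).det := by
    conv_lhs => rw [← fromBlocks_toBlocks M]
    rw [det_fromBlocks₁₁]
  rw [hcore, hdet, minor_det M 0 0, minor_det M 1 1, minor_det M 0 1, minor_det M 1 0]
  rw [Matrix.det_fin_two]
  ring

lemma det_add_smul_one_eq_eval {n : ℕ} (A : Matrix (Fin n) (Fin n) ℝ) (ε : ℝ) :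
    (A + ε • 1).det = (Matrix.charpoly (-A)).eval ε := by
  rw [Matrix.charpoly]
  have hmap : (Matrix.charmatrix (-A)).det.eval ε
      = ((Matrix.charmatrix (-A)).map (Polynomial.evalRingHom ε)).det := by
    have h := RingHom.map_det (Polynomial.evalRingHom ε) ((-A).charmatrix)
    rw [RingHom.mapMatrix_apply] at h
    simpa using h
  rw [hmap]
  congr 1
  ext i j
  by_cases h : i = j
  · subst h
    simp [Matrix.charmatrix_apply_eq, Matrix.one_apply]; ring
  · simp [Matrix.charmatrix_apply_ne _ _ _ h, Matrix.one_apply, h]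

lemma finite_bad {n : ℕ} (A : Matrix (Fin n) (Fin n) ℝ) :
    {ε : ℝ | (A + ε • 1).det = 0}.Finite := by
  have h : {ε : ℝ | (A + ε • 1).det = 0} ⊆ {ε : ℝ | (Matrix.charpoly (-A)).IsRoot ε} := by
    intro ε hε
    simp only [Set.mem_setOf_eq] at hε ⊢
    rwa [Polynomial.IsRoot, ← det_add_smul_one_eq_eval]
  exact (Polynomial.finite_setOf_isRoot (Matrix.charpoly_monic (-A)).ne_zero).subset h

theorem desnanot_sum {n : ℕ} (M : Matrix (Fin n ⊕ Fin 2) (Fin n ⊕ Fin 2) ℝ) :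
    M.det * (M.submatrix Sum.inl Sum.inl).det =
      (M.submatrix (keepEmb n 0) (keepEmb n 0)).det *
          (M.submatrix (keepEmb n 1) (keepEmb n 1)).det -
        (M.submatrix (keepEmb n 0) (keepEmb n 1)).det *
          (M.submatrix (keepEmb n 1) (keepEmb n 0)).det := by
  classical
  set A := M.toBlocks₁₁ with hA
  set E : Matrix (Fin n ⊕ Fin 2) (Fin n ⊕ Fin 2) ℝ := fromBlocks 1 0 0 0 with hE
  have hblock : ∀ ε : ℝ, (M + ε • E).toBlocks₁₁ = A + ε • 1 := by
    intro ε; ext i j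
    simp [toBlocks₁₁, hE, hA]
  set L : ℝ → ℝ := fun ε => (M + ε • E).det * ((M + ε • E).submatrix Sum.inl Sum.inl).det with hL
  set R : ℝ → ℝ := fun ε =>
      ((M + ε • E).submatrix (keepEmb n 0) (keepEmb n 0)).det *
          ((M + ε • E).submatrix (keepEmb n 1) (keepEmb n 1)).det -
        ((M + ε • E).submatrix (keepEmb n 0) (keepEmb n 1)).det *
          ((M + ε • E).submatrix (keepEmb n 1) (keepEmb n 0)).det with hR
  have hMc : Continuous fun ε : ℝ => M + ε • E :=
    continuous_const.add (continuous_id.smul continuous_const)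
  have hLc : Continuous L := (hMc.matrix_det).mul ((hMc.matrix_submatrix _ _).matrix_det)
  have hRc : Continuous R := by
    apply Continuous.sub <;>
      exact ((hMc.matrix_submatrix _ _).matrix_det).mul ((hMc.matrix_submatrix _ _).matrix_det)
  have hLR : ∀ ε : ℝ, (A + ε • 1).det ≠ 0 → L ε = R ε := by
    intro ε hne
    have : Invertible ((M + ε • E).toBlocks₁₁) := by
      rw [hblock]
      exact Matrix.invertibleOfIsUnitDet _ (isUnit_iff_ne_zero.mpr hne)
    exact desnanot_sum_inv _
  have hev : ∀ᶠ ε in 𝓝[≠] (0 : ℝ), L ε = R ε := by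
    have h1 : ∀ᶠ ε in 𝓝 (0 : ℝ), ε ∉ ({ε : ℝ | (A + ε • 1).det = 0} \ {0}) := by
      have hcl : IsClosed ({ε : ℝ | (A + ε • 1).det = 0} \ {0}) :=
        (Set.Finite.diff (finite_bad A) :
          ({ε : ℝ | (A + ε • 1).det = 0} \ {0}).Finite).isClosed
      exact hcl.isOpen_compl.eventually_mem (by simp)
    have h1' := eventually_nhdsWithin_of_eventually_nhds (s := {(0:ℝ)}ᶜ) h1
    filter_upwards [h1', self_mem_nhdsWithin] with ε hε hε0
    apply hLR
    intro hzero
    exact hε ⟨hzero, hε0⟩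
  have hT1 : Tendsto L (𝓝[≠] (0:ℝ)) (𝓝 (L 0)) := (hLc.tendsto 0).mono_left nhdsWithin_le_nhds
  have hT2 : Tendsto R (𝓝[≠] (0:ℝ)) (𝓝 (R 0)) := (hRc.tendsto 0).mono_left nhdsWithin_le_nhds
  have h0 : L 0 = R 0 := tendsto_nhds_unique (hT1.congr' hev) hT2
  simpa [hL, hR] using h0

theorem hasDerivAt_det {ι : Type*} [Fintype ι] [DecidableEq ι]
    (A : ℝ → Matrix ι ι ℝ) (A' : Matrix ι ι ℝ) (x : ℝ)
    (h : ∀ i j, HasDerivAt (fun y => A y i j) (A' i j) x) :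
    HasDerivAt (fun y => (A y).det)
      (∑ i, ((A x).updateRow i (A' i)).det) x := by
  classical
  have hterm : ∀ σ : Equiv.Perm ι, HasDerivAt
      (fun y => ((Equiv.Perm.sign σ : ℤ) : ℝ) * ∏ i, A y (σ i) i)
      (((Equiv.Perm.sign σ : ℤ) : ℝ) *
        ∑ j, (∏ k ∈ Finset.univ.erase j, A x (σ k) k) * A' (σ j) j) x := by
    intro σ
    have hp := HasDerivAt.finset_prod (u := Finset.univ)
      (f := fun i y => A y (σ i) i) (f' := fun i => A' (σ i) i)
      (fun i _ => h (σ i) i)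
    have := hp.const_mul (((Equiv.Perm.sign σ : ℤ) : ℝ))
    simpa [smul_eq_mul] using this
  have hsum := HasDerivAt.fun_sum (u := Finset.univ)
    (A := fun σ y => ((Equiv.Perm.sign σ : ℤ) : ℝ) * ∏ i, A y (σ i) i)
    (A' := fun σ => ((Equiv.Perm.sign σ : ℤ) : ℝ) *
        ∑ j, (∏ k ∈ Finset.univ.erase j, A x (σ k) k) * A' (σ j) j)
    (fun σ _ => hterm σ)
  have hfun : (fun y => (A y).det) =
      fun y => ∑ σ : Equiv.Perm ι, ((Equiv.Perm.sign σ : ℤ) : ℝ) * ∏ i, A y (σ i) i := by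
    funext y; rw [Matrix.det_apply']
  rw [hfun]
  refine HasDerivAt.congr_deriv hsum (Eq.symm ?_)
  -- derivative values equal
  have hrow : ∀ (σ : Equiv.Perm ι) (j : ι),
      (∏ k, ((A x).updateRow (σ j) (A' (σ j))) (σ k) k)
        = A' (σ j) j * ∏ k ∈ Finset.univ.erase j, A x (σ k) k := by
    intro σ j
    have hfun2 : (fun k => ((A x).updateRow (σ j) (A' (σ j))) (σ k) k)
        = Function.update (fun k => A x (σ k) k) j (A' (σ j) j) := by
      funext k
      by_cases hk : k = j
      · subst hk; simp [Matrix.updateRow_apply]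
      · have : σ k ≠ σ j := fun hc => hk (σ.injective hc)
        simp [Matrix.updateRow_apply, this, Function.update_of_ne hk]
    rw [hfun2, Finset.prod_update_of_mem (Finset.mem_univ j)]
    rw [Finset.erase_eq]
  calc ∑ i, ((A x).updateRow i (A' i)).det
      = ∑ i, ∑ σ : Equiv.Perm ι, ((Equiv.Perm.sign σ : ℤ) : ℝ) *
          ∏ k, ((A x).updateRow i (A' i)) (σ k) k := by
        simp_rw [Matrix.det_apply']
    _ = ∑ σ : Equiv.Perm ι, ∑ i, ((Equiv.Perm.sign σ : ℤ) : ℝ) *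
          ∏ k, ((A x).updateRow i (A' i)) (σ k) k := Finset.sum_comm
    _ = ∑ σ : Equiv.Perm ι, ((Equiv.Perm.sign σ : ℤ) : ℝ) *
          ∑ j, (∏ k ∈ Finset.univ.erase j, A x (σ k) k) * A' (σ j) j := by
        refine Finset.sum_congr rfl fun σ _ => ?_
        rw [← Finset.mul_sum]
        congr 1
        rw [← Equiv.sum_comp σ (fun i => ∏ k, ((A x).updateRow i (A' i)) (σ k) k)]
        refine Finset.sum_congr rfl fun j _ => ?_
        rw [hrow σ j, mul_comm]

variable {I : Set ℝ}

lemma iterW_eq (hI : IsOpen I) (g : ℝ → ℝ) (m : ℕ) :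
    Set.EqOn (iteratedDerivWithin m g I) (iteratedDeriv m g) I := by
  intro x hx
  rw [iteratedDerivWithin_eq_iteratedFDerivWithin, iteratedDeriv_eq_iteratedFDeriv,
    iteratedFDerivWithin_of_isOpen m hI hx]

lemma iter_hasDerivAt (hI : IsOpen I) {g : ℝ → ℝ} (hg : AnalyticOnNhd ℝ g I)
    (m : ℕ) {x : ℝ} (hx : x ∈ I) :
    HasDerivAt (iteratedDerivWithin m g I) (iteratedDerivWithin (m + 1) g I x) x := by
  have h1 : AnalyticOnNhd ℝ (iteratedDeriv m g) I := by
    rw [iteratedDeriv_eq_iterate]; exact hg.iterated_deriv m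
  have h2 : HasDerivAt (iteratedDeriv m g) (iteratedDeriv (m + 1) g x) x := by
    have hd := ((h1 x hx).differentiableAt).hasDerivAt
    rwa [show deriv (iteratedDeriv m g) x = iteratedDeriv (m + 1) g x by
      rw [iteratedDeriv_succ]] at hd
  have hev : iteratedDerivWithin m g I =ᶠ[nhds x] iteratedDeriv m g :=
    Filter.eventuallyEq_of_mem (hI.mem_nhds hx) (iterW_eq hI g m)
  have h3 : HasDerivAt (iteratedDerivWithin m g I) (iteratedDeriv (m + 1) g x) x :=
    h2.congr_of_eventuallyEq hev
  rwa [← iterW_eq hI g (m + 1) hx] at h3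

/-- the matrix-determinant functions we consider -/
noncomputable def DET (I : Set ℝ) (m : ℕ) (r : ℕ → ℕ) (c : ℕ → ℝ → ℝ) (x : ℝ) : ℝ :=
  (Matrix.of fun i j : Fin m => iteratedDerivWithin (r i) (c j) I x).det

lemma DET_hasDerivAt (hI : IsOpen I) (m : ℕ) (r : ℕ → ℕ) (c : ℕ → ℝ → ℝ)
    (hc : ∀ j < m, AnalyticOnNhd ℝ (c j) I) {x : ℝ} (hx : x ∈ I) :
    HasDerivAt (DET I m r c)
      (∑ i : Fin m, DET I m (fun i' => if i' = (i : ℕ) then r i' + 1 else r i') c x) x := by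
  classical
  have h := hasDerivAt_det (fun y => Matrix.of fun i j : Fin m => iteratedDerivWithin (r i) (c j) I y)
    (Matrix.of fun i j : Fin m => iteratedDerivWithin (r i + 1) (c j) I x) x
    (fun i j => iter_hasDerivAt hI (hc j j.isLt) (r i) hx)
  have hval : (∑ i : Fin m,
        ((Matrix.of fun i' j : Fin m => iteratedDerivWithin (r i') (c j) I x).updateRow i
          ((Matrix.of fun i' j : Fin m => iteratedDerivWithin (r i' + 1) (c j) I x) i)).det)
      = ∑ i : Fin m, DET I m (fun i' => if i' = (i : ℕ) then r i' + 1 else r i') c x := by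
    refine Finset.sum_congr rfl fun i _ => ?_
    unfold DET
    congr 1
    ext i' j
    by_cases hii : i' = i
    · subst hii
      simp [Matrix.updateRow_apply]
    · have hne : (i' : ℕ) ≠ (i : ℕ) := fun hc' => hii (Fin.ext hc')
      simp [Matrix.updateRow_apply, hii, hne]
  rw [← hval]
  exact h

/-- bumped rows for a standard-rows matrix -/
def rbump (m : ℕ) : ℕ → ℕ := fun i => if i = m - 1 then m else i

lemma DET_id_hasDerivAt (hI : IsOpen I) (m : ℕ) (c : ℕ → ℝ → ℝ)
    (hc : ∀ j < m + 1, AnalyticOnNhd ℝ (c j) I) {x : ℝ} (hx : x ∈ I) :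
    HasDerivAt (DET I (m + 1) id c) (DET I (m + 1) (rbump (m + 1)) c x) x := by
  classical
  have h := DET_hasDerivAt hI (m + 1) id c hc hx
  have hval : (∑ i : Fin (m + 1),
      DET I (m + 1) (fun i' => if i' = (i : ℕ) then i' + 1 else i') c x)
      = DET I (m + 1) (rbump (m + 1)) c x := by
    rw [Finset.sum_eq_single (Fin.last m)]
    · congr 1
      funext i'
      simp only [rbump, Fin.val_last]
      by_cases hi : i' = m <;> simp [hi]
    · intro i _ hne
      have him : (i : ℕ) < m := by
        have hlt := i.isLt
        rcases Nat.lt_succ_iff_lt_or_eq.mp hlt with h' | h'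
        · exact h'
        · exact absurd (Fin.ext (by simpa using h') : i = Fin.last m) hne
      apply Matrix.det_zero_of_row_eq (i := (⟨i, by omega⟩ : Fin (m+1)))
        (j := (⟨(i:ℕ)+1, by omega⟩ : Fin (m+1)))
      · intro hc'
        have : (i : ℕ) = (i : ℕ) + 1 := congrArg Fin.val hc'
        omega
      · funext j
        simp only [Matrix.of_apply]
        congr 1
        split_ifs <;> omega
    · intro hmem
      exact absurd (Finset.mem_univ _) hmem
  rw [← hval]
  exact h

def cR (f : ℕ → ℝ → ℝ) (F : ℝ → ℝ) (k : ℕ) : ℕ → ℝ → ℝ := fun j => if j < k then f j else F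


theorem key_identity' (I : Set ℝ) (k : ℕ) (f : ℕ → ℝ → ℝ) (F : ℝ → ℝ) (x : ℝ) :
    DET I (k+2) id (fun j => if j < k+1 then f j else F) x * DET I k id f x =
      DET I (k+1) id f x * DET I (k+1) (rbump (k+1)) (fun j => if j < k then f j else F) x
      - DET I (k+1) id (fun j => if j < k then f j else F) x
          * DET I (k+1) (rbump (k+1)) f x := by
  classical
  set colBig : ℕ → ℝ → ℝ := fun j => if j < k+1 then f j else F with hcolBig
  set A : Matrix (Fin (k+2)) (Fin (k+2)) ℝ :=
    Matrix.of fun i j : Fin (k+2) => iteratedDerivWithin (i : ℕ) (colBig (j : ℕ)) I x with hA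
  set e2 : Fin k ⊕ Fin 2 ≃ Fin (k+2) := finSumFinEquiv with he2
  set e1 : Fin k ⊕ Fin 1 ≃ Fin (k+1) := finSumFinEquiv with he1
  set M : Matrix (Fin k ⊕ Fin 2) (Fin k ⊕ Fin 2) ℝ := A.submatrix e2 e2 with hM
  have hdetM : M.det = DET I (k+2) id colBig x := by
    rw [hM, Matrix.det_submatrix_equiv_self]
    rfl
  have hcore : (M.submatrix Sum.inl Sum.inl).det = DET I k id f x := by
    have : M.submatrix Sum.inl Sum.inl
        = Matrix.of fun i j : Fin k => iteratedDerivWithin (id (i : ℕ)) (f (j : ℕ)) I x := by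
      ext i j
      simp only [hM, Matrix.submatrix_apply, hA, Matrix.of_apply, he2,
        finSumFinEquiv_apply_left, Fin.coe_castAdd, hcolBig, id_eq]
      rw [if_pos (by omega)]
    rw [this]; rfl
  have minor_eq : ∀ (a b : Fin 2) (r' : ℕ → ℕ) (c' : ℕ → ℝ → ℝ),
      (∀ i, i < k → r' i = i) → (r' k = k + (a : ℕ)) →
      (∀ j, j < k → c' j = f j) → (c' k = colBig (k + (b : ℕ))) →
      (M.submatrix (keepEmb k a) (keepEmb k b)).det = DET I (k+1) r' c' x := by
    intro a b r' c' h1 h2 h3 h4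
    rw [hM, Matrix.submatrix_submatrix]
    have heq : A.submatrix (⇑e2 ∘ keepEmb k a) (⇑e2 ∘ keepEmb k b)
        = (Matrix.of fun i j : Fin (k+1) =>
            iteratedDerivWithin (r' (i : ℕ)) (c' (j : ℕ)) I x).submatrix e1 e1 := by
      ext i j
      cases i with
      | inl i =>
        cases j with
        | inl j =>
          simp only [Matrix.submatrix_apply, Function.comp_apply, keepEmb, Sum.map_inl, id_eq,
            he2, he1, finSumFinEquiv_apply_left, Fin.coe_castAdd, hA, Matrix.of_apply]
          rw [h1 _ i.isLt, h3 _ j.isLt, hcolBig]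
          simp only []
          rw [if_pos (by omega)]
        | inr j =>
          simp only [Matrix.submatrix_apply, Function.comp_apply, keepEmb, Sum.map_inl,
            Sum.map_inr, id_eq, he2, he1, finSumFinEquiv_apply_left, finSumFinEquiv_apply_right,
            Fin.coe_castAdd, Fin.coe_natAdd, hA, Matrix.of_apply]
          rw [h1 _ i.isLt]
          have hj : (j : ℕ) = 0 := Fin.val_eq_zero j
          rw [hj, Nat.add_zero, h4]
      | inr i =>
        cases j with
        | inl j =>
          simp only [Matrix.submatrix_apply, Function.comp_apply, keepEmb, Sum.map_inl,
            Sum.map_inr, id_eq, he2, he1, finSumFinEquiv_apply_left, finSumFinEquiv_apply_right,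
            Fin.coe_castAdd, Fin.coe_natAdd, hA, Matrix.of_apply]
          have hi : (i : ℕ) = 0 := Fin.val_eq_zero i
          rw [hi, Nat.add_zero, h3 _ j.isLt, h2, hcolBig]
          simp only []
          rw [if_pos (by omega)]
        | inr j =>
          simp only [Matrix.submatrix_apply, Function.comp_apply, keepEmb, Sum.map_inr, id_eq,
            he2, he1, finSumFinEquiv_apply_right, Fin.coe_natAdd, hA, Matrix.of_apply]
          have hi : (i : ℕ) = 0 := Fin.val_eq_zero i
          have hj : (j : ℕ) = 0 := Fin.val_eq_zero j
          rw [hi, hj, Nat.add_zero, h2, h4]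
    rw [heq, Matrix.det_submatrix_equiv_self]
    rfl
  have h00 := minor_eq 0 0 id f (fun _ _ => rfl) (by simp)
    (fun _ _ => rfl) (by rw [hcolBig]; simp)
  have h11 := minor_eq 1 1 (rbump (k+1)) (fun j => if j < k then f j else F)
    (fun i hi => by simp [rbump]; omega) (by simp [rbump])
    (fun j hj => by simp [hj]) (by rw [hcolBig]; simp)
  have h01 := minor_eq 0 1 id (fun j => if j < k then f j else F)
    (fun _ _ => rfl) (by simp)
    (fun j hj => by simp [hj]) (by rw [hcolBig]; simp)
  have h10 := minor_eq 1 0 (rbump (k+1)) f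
    (fun i hi => by simp [rbump]; omega) (by simp [rbump])
    (fun _ _ => rfl) (by rw [hcolBig]; simp)
  have hD := desnanot_sum M
  rw [hdetM, hcore, h00, h11, h01, h10] at hD
  rw [hcolBig] at hD ⊢
  linarith [hD]

theorem key_identity (I : Set ℝ) (k : ℕ) (f : ℕ → ℝ → ℝ) (F : ℝ → ℝ) (x : ℝ) :
    DET I (k+2) id (cR f F (k+1)) x * DET I k id f x =
      DET I (k+1) id f x * DET I (k+1) (rbump (k+1)) (cR f F k) x
      - DET I (k+1) id (cR f F k) x * DET I (k+1) (rbump (k+1)) f x :=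
  key_identity' I k f F x


theorem rolle_count {I : Set ℝ} (hIo : IsOpen I) (hIc : IsPreconnected I)
    {g h : ℝ → ℝ}
    (hg : ∀ x ∈ I, DifferentiableAt ℝ g x) (hh : ∀ x ∈ I, DifferentiableAt ℝ h x)
    (hgf : {x ∈ I | g x = 0}.Finite)
    (hwf : {x ∈ I | g x * deriv h x - deriv g x * h x = 0}.Finite) :
    {x ∈ I | h x = 0}.Finite ∧
      {x ∈ I | h x = 0}.ncard ≤
        1 + {x ∈ I | g x = 0}.ncard + {x ∈ I | g x * deriv h x - deriv g x * h x = 0}.ncard := by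
  classical
  have hord : I.OrdConnected := hIc.ordConnected
  set Zg := hgf.toFinset with hZg
  set Zw := hwf.toFinset with hZw
  have key : ∀ S : Finset ℝ, (↑S : Set ℝ) ⊆ {x ∈ I | h x = 0} →
      S.card ≤ 1 + Zg.card + Zw.card := by
    intro S hS
    by_cases hS2 : S.card ≤ 1
    · omega
    push_neg at hS2
    have hSne : S.Nonempty := Finset.card_pos.mp (by omega)
    set M := S.max' hSne with hM
    set T := S.erase M with hT
    have hTS : ∀ x ∈ T, x ∈ S := fun x hx => Finset.mem_of_mem_erase hx
    have hfilt : ∀ x ∈ T, (S.filter (fun y => x < y)).Nonempty := by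
      intro x hx
      refine ⟨M, Finset.mem_filter.mpr ⟨S.max'_mem hSne, ?_⟩⟩
      exact lt_of_le_of_ne (S.le_max' x (hTS x hx)) (Finset.ne_of_mem_erase hx)
    set nxt : ℝ → ℝ := fun x =>
      if hx : (S.filter (fun y => x < y)).Nonempty then (S.filter (fun y => x < y)).min' hx
      else 0 with hnxt
    have hnxt_mem : ∀ x ∈ T, nxt x ∈ S ∧ x < nxt x := by
      intro x hx
      have hne := hfilt x hx
      have := Finset.min'_mem _ hne
      rw [Finset.mem_filter] at this
      simp only [hnxt, dif_pos hne]
      exact this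
    have hnxt_le : ∀ x ∈ T, ∀ y ∈ S, x < y → nxt x ≤ y := by
      intro x hx y hy hxy
      have hne := hfilt x hx
      simp only [hnxt, dif_pos hne]
      exact Finset.min'_le _ _ (Finset.mem_filter.mpr ⟨hy, hxy⟩)
    have hwit : ∀ x ∈ T, ∃ w : ℝ ⊕ ℝ,
        (∃ z, w = Sum.inl z ∧ z ∈ Zg ∧ z ∈ Set.Ioc x (nxt x)) ∨
        (∃ z, w = Sum.inr z ∧ z ∈ Zw ∧ z ∈ Set.Ico x (nxt x)) := by
      intro a ha
      obtain ⟨hbS, hab⟩ := hnxt_mem a ha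
      set b := nxt a
      have haI : a ∈ I := (hS (hTS a ha)).1
      have ha0 : h a = 0 := (hS (hTS a ha)).2
      have hbI : b ∈ I := (hS hbS).1
      have hb0 : h b = 0 := (hS hbS).2
      have hIcc : Set.Icc a b ⊆ I := hord.out haI hbI
      by_cases h1 : ∃ z ∈ Set.Ioo a b, g z = 0
      · obtain ⟨z, hz, hz0⟩ := h1
        refine ⟨Sum.inl z, Or.inl ⟨z, rfl, ?_, ⟨hz.1, le_of_lt hz.2⟩⟩⟩
        rw [Set.Finite.mem_toFinset]
        exact ⟨hIcc ⟨le_of_lt hz.1, le_of_lt hz.2⟩, hz0⟩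
      by_cases h2 : g b = 0
      · refine ⟨Sum.inl b, Or.inl ⟨b, rfl, ?_, ⟨hab, le_refl b⟩⟩⟩
        rw [Set.Finite.mem_toFinset]
        exact ⟨hbI, h2⟩
      by_cases h3 : g a = 0
      · refine ⟨Sum.inr a, Or.inr ⟨a, rfl, ?_, ⟨le_refl a, hab⟩⟩⟩
        rw [Set.Finite.mem_toFinset]
        refine ⟨haI, ?_⟩
        rw [h3, ha0]; ring
      · -- Rolle case
        have hgne : ∀ z ∈ Set.Icc a b, g z ≠ 0 := by
          intro z hz hz0
          rcases eq_or_lt_of_le hz.1 with rfl | hlt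
          · exact h3 hz0
          rcases eq_or_lt_of_le hz.2 with rfl | hlt2
          · exact h2 hz0
          · exact h1 ⟨z, ⟨hlt, hlt2⟩, hz0⟩
        have hcont : ContinuousOn (fun y => h y / g y) (Set.Icc a b) := by
          apply ContinuousOn.div
          · intro z hz; exact ((hh z (hIcc hz)).continuousAt).continuousWithinAt
          · intro z hz; exact ((hg z (hIcc hz)).continuousAt).continuousWithinAt
          · exact hgne
        have hends : (fun y => h y / g y) a = (fun y => h y / g y) b := by
          simp only [ha0, hb0, zero_div]
        obtain ⟨c, hc, hc0⟩ := exists_deriv_eq_zero hab hcont hends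
        have hcI : c ∈ I := hIcc ⟨le_of_lt hc.1, le_of_lt hc.2⟩
        have hgc : g c ≠ 0 := hgne c ⟨le_of_lt hc.1, le_of_lt hc.2⟩
        have hdiv : deriv (fun y => h y / g y) c =
            (deriv h c * g c - h c * deriv g c) / (g c) ^ 2 :=
          deriv_div (hh c hcI) (hg c hcI) hgc
        rw [hdiv] at hc0
        have hnum : deriv h c * g c - h c * deriv g c = 0 :=
          (div_eq_zero_iff.mp hc0).resolve_right (pow_ne_zero _ hgc)
        refine ⟨Sum.inr c, Or.inr ⟨c, rfl, ?_, ⟨le_of_lt hc.1, hc.2⟩⟩⟩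
        rw [Set.Finite.mem_toFinset]
        exact ⟨hcI, by linarith⟩
    -- choose witnesses
    choose wit hwit' using hwit
    set φ : ℝ → ℝ ⊕ ℝ := fun x => if hx : x ∈ T then wit x hx else Sum.inl 0 with hφ
    have hmaps : ∀ x ∈ T, φ x ∈ Zg.disjSum Zw := by
      intro x hx
      simp only [hφ, dif_pos hx]
      rcases hwit' x hx with ⟨z, hw, hz, _⟩ | ⟨z, hw, hz, _⟩
      · rw [hw]; exact Finset.inl_mem_disjSum.mpr hz
      · rw [hw]; exact Finset.inr_mem_disjSum.mpr hz
    have hinj_aux : ∀ x1 ∈ T, ∀ x2 ∈ T, x1 < x2 → φ x1 ≠ φ x2 := by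
      intro x1 hx1 x2 hx2 hlt heq
      have hle : nxt x1 ≤ x2 := hnxt_le x1 hx1 x2 (hTS x2 hx2) hlt
      simp only [hφ, dif_pos hx1, dif_pos hx2] at heq
      rcases hwit' x1 hx1 with ⟨z1, hw1, _, hz1⟩ | ⟨z1, hw1, _, hz1⟩ <;>
        rcases hwit' x2 hx2 with ⟨z2, hw2, _, hz2⟩ | ⟨z2, hw2, _, hz2⟩ <;>
          rw [hw1, hw2] at heq
      · have : z1 = z2 := by injection heq
        subst this
        have := hz1.2
        have := hz2.1
        linarith
      · exact absurd heq (by simp)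
      · exact absurd heq (by simp)
      · have : z1 = z2 := by injection heq
        subst this
        have := hz1.2
        have := hz2.1
        linarith
    have hinj : Set.InjOn φ ↑T := by
      intro x1 hx1 x2 hx2 heq
      by_contra hne
      rcases lt_or_gt_of_ne hne with hlt | hlt
      · exact hinj_aux x1 hx1 x2 hx2 hlt heq
      · exact hinj_aux x2 hx2 x1 hx1 hlt heq.symm
    have hcard := Finset.card_le_card_of_injOn φ hmaps hinj
    rw [Finset.card_disjSum] at hcard
    have hTcard : T.card = S.card - 1 := Finset.card_erase_of_mem (S.max'_mem hSne)
    omega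
  by_cases hfin : {x ∈ I | h x = 0}.Finite
  · refine ⟨hfin, ?_⟩
    have hsub : (↑hfin.toFinset : Set ℝ) ⊆ {x ∈ I | h x = 0} := by
      rw [Set.Finite.coe_toFinset]
    have := key hfin.toFinset hsub
    rw [Set.ncard_eq_toFinset_card _ hfin, Set.ncard_eq_toFinset_card _ hgf,
      Set.ncard_eq_toFinset_card _ hwf]
    exact this
  · exfalso
    have hinf : {x ∈ I | h x = 0}.Infinite := hfin
    obtain ⟨F', hsub, hcard⟩ := hinf.exists_subset_card_eq (1 + Zg.card + Zw.card + 1)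
    have := key F' hsub
    omega

end KPTAux

open scoped BigOperators

/-- **Wronskian bound on real zeros (Theorem 5 of [KPT13]).**
Let `I` be an open interval of `ℝ` and `f 0, …, f (t-1) : I → ℝ` (with `t ≥ 2`) analytic
functions, linearly independent over `ℝ` on `I`.  For `1 ≤ i ≤ t` let `W i` be the Wronskian
of `f 0, …, f (i-1)`.  If each `W j` has finitely many zeros on `I`, then the sum
`f 0 + ⋯ + f (t-1)` has finitely many zeros on `I` and
`Z(∑ f) ≤ t - 1 + Z(W t) + Z(W (t-1)) + 2 ∑_{j=1}^{t-2} Z(W j)`. -/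
theorem zeros_sum_le_wronskian_zeros
    (t : ℕ) (ht : 2 ≤ t)
    (I : Set ℝ) (hIopen : IsOpen I) (hIconn : IsPreconnected I)
    (f : ℕ → ℝ → ℝ)
    (hf : ∀ i < t, AnalyticOnNhd ℝ (f i) I)
    (hli : LinearIndependent ℝ fun i : Fin t => I.restrict (f i))
    (W : ℕ → ℝ → ℝ)
    (hW : ∀ k, W k = fun x =>
      Matrix.det (Matrix.of fun i j : Fin k => iteratedDerivWithin i (f j) I x))
    (hfin : ∀ j, 1 ≤ j → j ≤ t → {x ∈ I | W j x = 0}.Finite) :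
    {x ∈ I | ∑ i ∈ Finset.range t, f i x = 0}.Finite ∧
      {x ∈ I | ∑ i ∈ Finset.range t, f i x = 0}.ncard ≤
        (t - 1) + {x ∈ I | W t x = 0}.ncard + {x ∈ I | W (t - 1) x = 0}.ncard +
          2 * ∑ j ∈ Finset.Icc 1 (t - 2), {x ∈ I | W j x = 0}.ncard := by
  classical
  have hIuniq : UniqueDiffOn ℝ I := hIopen.uniqueDiffOn
  set F : ℝ → ℝ := fun x => ∑ i ∈ Finset.range t, f i x with hF
  have hFanal : AnalyticOnNhd ℝ F I := by
    apply Finset.analyticOnNhd_fun_sum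
    intro i hi
    exact hf i (Finset.mem_range.mp hi)
  -- analyticity of the cR columns
  have hcanal : ∀ k ≤ t - 1, ∀ j < k + 1, AnalyticOnNhd ℝ (KPTAux.cR f F k j) I := by
    intro k hk j hj
    unfold KPTAux.cR
    by_cases hjk : j < k
    · rw [if_pos hjk]; exact hf j (by omega)
    · rw [if_neg hjk]; exact hFanal
  -- W as DET
  have hWD : ∀ k, {x ∈ I | W k x = 0} = {x ∈ I | KPTAux.DET I k id f x = 0} := by
    intro k
    rw [hW k]
    rfl
  -- iterated derivatives of F
  have hiter_sum : ∀ m, ∀ x ∈ I, iteratedDerivWithin m F I x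
      = ∑ l ∈ Finset.range t, iteratedDerivWithin m (f l) I x := by
    intro m
    induction m with
    | zero =>
      intro x hx
      simp only [iteratedDerivWithin_zero, hF]
    | succ m ih =>
      intro x hx
      have hsum : HasDerivAt (fun y => ∑ l ∈ Finset.range t, iteratedDerivWithin m (f l) I y)
          (∑ l ∈ Finset.range t, iteratedDerivWithin (m+1) (f l) I x) x :=
        HasDerivAt.fun_sum (fun l hl =>
          KPTAux.iter_hasDerivAt hIopen (hf l (Finset.mem_range.mp hl)) m hx)
      have hev : iteratedDerivWithin m F I
          =ᶠ[nhds x] (fun y => ∑ l ∈ Finset.range t, iteratedDerivWithin m (f l) I y) :=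
        Filter.eventuallyEq_of_mem (hIopen.mem_nhds hx) (fun y hy => ih y hy)
      have h2 : HasDerivAt (iteratedDerivWithin m F I)
          (∑ l ∈ Finset.range t, iteratedDerivWithin (m+1) (f l) I x) x :=
        hsum.congr_of_eventuallyEq hev
      rw [iteratedDerivWithin_succ, derivWithin_of_isOpen hIopen hx]
      exact h2.deriv
  -- base pointwise equality
  have hbase_fun : ∀ x ∈ I,
      KPTAux.DET I (t-1+1) id (KPTAux.cR f F (t-1)) x = KPTAux.DET I (t-1+1) id f x := by
    intro x hx
    unfold KPTAux.DET
    set A : Matrix (Fin (t-1+1)) (Fin (t-1+1)) ℝ :=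
      Matrix.of fun i j : Fin (t-1+1) => iteratedDerivWithin (id (i:ℕ)) (f (j:ℕ)) I x with hA
    set jl : Fin (t-1+1) := ⟨t-1, by omega⟩ with hjl
    have hupd : (Matrix.of fun i j : Fin (t-1+1) =>
          iteratedDerivWithin (id (i:ℕ)) (KPTAux.cR f F (t-1) (j:ℕ)) I x)
        = A.updateCol jl (fun i => ∑ l : Fin (t-1+1), (fun _ : Fin (t-1+1) => (1:ℝ)) l • A i l) := by
      ext i j
      rw [Matrix.updateCol_apply]
      by_cases hj : j = jl
      · rw [if_pos hj, hj]
        simp only [Matrix.of_apply, one_smul, hA, id_eq]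
        have hcc : KPTAux.cR f F (t-1) ((jl : Fin (t-1+1)) : ℕ) = F := by
          unfold KPTAux.cR
          rw [hjl]
          simp
        rw [hcc, hiter_sum _ x hx]
        rw [Fin.sum_univ_eq_sum_range (fun l => iteratedDerivWithin (i:ℕ) (f l) I x) (t-1+1),
          show Finset.range (t-1+1) = Finset.range t from by rw [show t - 1 + 1 = t by omega]]
      · rw [if_neg hj]
        simp only [Matrix.of_apply, hA, id_eq]
        congr 1
        unfold KPTAux.cR
        have hjlt : (j : ℕ) < t - 1 := by
          have := j.isLt
          have hne : (j : ℕ) ≠ t - 1 := by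
            intro hcon
            exact hj (Fin.ext (by rw [hcon, hjl]))
          omega
        rw [if_pos hjlt]
    rw [hupd, Matrix.det_updateCol_sum]
    simp
  -- main downward induction
  have main : ∀ m, m ≤ t - 1 →
      {x ∈ I | KPTAux.DET I ((t-1-m)+1) id (KPTAux.cR f F (t-1-m)) x = 0}.Finite ∧
      {x ∈ I | KPTAux.DET I ((t-1-m)+1) id (KPTAux.cR f F (t-1-m)) x = 0}.ncard ≤
        m + {x ∈ I | W t x = 0}.ncard
          + (∑ j ∈ Finset.Icc (t-m) (t-1), {x ∈ I | W j x = 0}.ncard)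
          + (∑ j ∈ Finset.Icc (t-1-m) (t-2), {x ∈ I | W j x = 0}.ncard) := by
    intro m
    induction m with
    | zero =>
      intro _
      have hseteq : {x ∈ I | KPTAux.DET I ((t-1-0)+1) id (KPTAux.cR f F (t-1-0)) x = 0}
          = {x ∈ I | W t x = 0} := by
        ext x
        simp only [Set.mem_setOf_eq, Nat.sub_zero]
        constructor
        · rintro ⟨hx, h0⟩
          refine ⟨hx, ?_⟩
          have := hbase_fun x hx
          rw [this] at h0
          rw [hW t]
          have htt : t - 1 + 1 = t := by omega
          rw [htt] at h0
          exact h0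
        · rintro ⟨hx, h0⟩
          refine ⟨hx, ?_⟩
          rw [hbase_fun x hx]
          rw [hW t] at h0
          have htt : t - 1 + 1 = t := by omega
          rw [htt]
          exact h0
      rw [Nat.sub_zero] at hseteq ⊢
      rw [hseteq]
      refine ⟨hfin t (by omega) le_rfl, ?_⟩
      rw [Finset.Icc_eq_empty (by omega), Finset.Icc_eq_empty (by omega)]
      simp
    | succ m ih =>
      intro hm
      have ihh0 := ih (by omega)
      obtain ⟨k, hk⟩ : ∃ k, t - 1 - (m+1) = k := ⟨_, rfl⟩
      have hk1 : t - 1 - m = k + 1 := by omega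
      rw [hk1] at ihh0
      rw [hk]
      have hkt : k + 1 ≤ t - 1 := by omega
      have ihh : {x ∈ I | KPTAux.DET I (k+2) id (KPTAux.cR f F (k+1)) x = 0}.Finite ∧
          {x ∈ I | KPTAux.DET I (k+2) id (KPTAux.cR f F (k+1)) x = 0}.ncard ≤
            m + {x ∈ I | W t x = 0}.ncard
              + (∑ j ∈ Finset.Icc (t-m) (t-1), {x ∈ I | W j x = 0}.ncard)
              + (∑ j ∈ Finset.Icc (k+1) (t-2), {x ∈ I | W j x = 0}.ncard) := ihh0
      -- rolle_count application
      have hganal : ∀ j < k + 1, AnalyticOnNhd ℝ (f j) I := fun j hj => hf j (by omega)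
      have hg : ∀ x ∈ I, DifferentiableAt ℝ (KPTAux.DET I (k+1) id f) x :=
        fun x hx => (KPTAux.DET_id_hasDerivAt hIopen k f hganal hx).differentiableAt
      have hh : ∀ x ∈ I, DifferentiableAt ℝ (KPTAux.DET I (k+1) id (KPTAux.cR f F k)) x :=
        fun x hx => (KPTAux.DET_id_hasDerivAt hIopen k (KPTAux.cR f F k)
          (hcanal k (by omega)) hx).differentiableAt
      have hgf : {x ∈ I | KPTAux.DET I (k+1) id f x = 0}.Finite := by
        rw [← hWD (k+1)]
        exact hfin (k+1) (by omega) (by omega)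
      have hWkfin : {x ∈ I | KPTAux.DET I k id f x = 0}.Finite := by
        rcases Nat.eq_zero_or_pos k with hk0 | hk0
        · subst hk0
          have : {x ∈ I | KPTAux.DET I 0 id f x = 0} = ∅ := by
            ext x
            simp only [Set.mem_setOf_eq, Set.mem_empty_iff_false, iff_false, not_and]
            intro _
            unfold KPTAux.DET
            rw [Matrix.det_fin_zero]
            norm_num
          rw [this]
          exact Set.finite_empty
        · rw [← hWD k]
          exact hfin k (by omega) (by omega)
      have hptw : ∀ x ∈ I,
          KPTAux.DET I (k+1) id f x * deriv (KPTAux.DET I (k+1) id (KPTAux.cR f F k)) x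
            - deriv (KPTAux.DET I (k+1) id f) x * KPTAux.DET I (k+1) id (KPTAux.cR f F k) x
          = KPTAux.DET I (k+2) id (KPTAux.cR f F (k+1)) x * KPTAux.DET I k id f x := by
        intro x hx
        have hdh : deriv (KPTAux.DET I (k+1) id (KPTAux.cR f F k)) x
            = KPTAux.DET I (k+1) (KPTAux.rbump (k+1)) (KPTAux.cR f F k) x :=
          (KPTAux.DET_id_hasDerivAt hIopen k (KPTAux.cR f F k) (hcanal k (by omega)) hx).deriv
        have hdg : deriv (KPTAux.DET I (k+1) id f) x
            = KPTAux.DET I (k+1) (KPTAux.rbump (k+1)) f x :=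
          (KPTAux.DET_id_hasDerivAt hIopen k f hganal hx).deriv
        rw [hdh, hdg]
        have hkey := KPTAux.key_identity I k f F x
        linear_combination -hkey
      have hseteq2 : {x ∈ I | KPTAux.DET I (k+1) id f x
              * deriv (KPTAux.DET I (k+1) id (KPTAux.cR f F k)) x
            - deriv (KPTAux.DET I (k+1) id f) x * KPTAux.DET I (k+1) id (KPTAux.cR f F k) x = 0}
          = {x ∈ I | KPTAux.DET I (k+2) id (KPTAux.cR f F (k+1)) x = 0}
            ∪ {x ∈ I | KPTAux.DET I k id f x = 0} := by
        ext x
        simp only [Set.mem_setOf_eq, Set.mem_union]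
        constructor
        · rintro ⟨hx, h0⟩
          rw [hptw x hx] at h0
          rcases mul_eq_zero.mp h0 with h | h
          · exact Or.inl ⟨hx, h⟩
          · exact Or.inr ⟨hx, h⟩
        · rintro (⟨hx, h0⟩ | ⟨hx, h0⟩) <;> refine ⟨hx, ?_⟩ <;> rw [hptw x hx]
          · rw [h0]; ring
          · rw [h0]; ring
      have hwf : {x ∈ I | KPTAux.DET I (k+1) id f x
              * deriv (KPTAux.DET I (k+1) id (KPTAux.cR f F k)) x
            - deriv (KPTAux.DET I (k+1) id f) x * KPTAux.DET I (k+1) id (KPTAux.cR f F k) x = 0}.Finite := by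
        rw [hseteq2]
        exact Set.Finite.union ihh.1 hWkfin
      have hroll := KPTAux.rolle_count hIopen hIconn hg hh hgf hwf
      have hUle : {x ∈ I | KPTAux.DET I (k+1) id f x
              * deriv (KPTAux.DET I (k+1) id (KPTAux.cR f F k)) x
            - deriv (KPTAux.DET I (k+1) id f) x * KPTAux.DET I (k+1) id (KPTAux.cR f F k) x = 0}.ncard
          ≤ {x ∈ I | KPTAux.DET I (k+2) id (KPTAux.cR f F (k+1)) x = 0}.ncard
            + {x ∈ I | KPTAux.DET I k id f x = 0}.ncard := by
        rw [hseteq2]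
        exact Set.ncard_union_le _ _
      -- the W-identifications
      have hgWn : {x ∈ I | KPTAux.DET I (k+1) id f x = 0}.ncard = {x ∈ I | W (k+1) x = 0}.ncard := by
        rw [hWD (k+1)]
      have hWkn : {x ∈ I | KPTAux.DET I k id f x = 0}.ncard ≤ {x ∈ I | W k x = 0}.ncard
          ∨ (k = 0 ∧ {x ∈ I | KPTAux.DET I k id f x = 0}.ncard = 0) := by
        rcases Nat.eq_zero_or_pos k with hk0 | hk0
        · subst hk0
          refine Or.inr ⟨rfl, ?_⟩
          have : {x ∈ I | KPTAux.DET I 0 id f x = 0} = ∅ := by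
            ext x
            simp only [Set.mem_setOf_eq, Set.mem_empty_iff_false, iff_false, not_and]
            intro _
            unfold KPTAux.DET
            rw [Matrix.det_fin_zero]
            norm_num
          rw [this, Set.ncard_empty]
        · left
          rw [hWD k]
      -- sum manipulations
      have hsum1 : ∑ j ∈ Finset.Icc (t-(m+1)) (t-1), {x ∈ I | W j x = 0}.ncard
          = {x ∈ I | W (k+1) x = 0}.ncard + ∑ j ∈ Finset.Icc (t-m) (t-1), {x ∈ I | W j x = 0}.ncard := by
        have hins : Finset.Icc (t-(m+1)) (t-1) = insert (k+1) (Finset.Icc (t-m) (t-1)) := by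
          ext a
          simp only [Finset.mem_Icc, Finset.mem_insert]
          omega
        rw [hins, Finset.sum_insert (by simp only [Finset.mem_Icc]; omega)]
      have hsum2 : ∑ j ∈ Finset.Icc k (t-2), {x ∈ I | W j x = 0}.ncard
          = {x ∈ I | W k x = 0}.ncard + ∑ j ∈ Finset.Icc (k+1) (t-2), {x ∈ I | W j x = 0}.ncard := by
        have hins : Finset.Icc k (t-2) = insert k (Finset.Icc (k+1) (t-2)) := by
          ext a
          simp only [Finset.mem_Icc, Finset.mem_insert]
          omega
        rw [hins, Finset.sum_insert (by simp only [Finset.mem_Icc]; omega)]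
      refine ⟨hroll.1, ?_⟩
      have h1 := hroll.2
      have h2 := ihh.2
      rw [hsum1, hsum2]
      rw [hgWn] at h1
      rcases hWkn with hc | ⟨hk0, hc⟩
      · omega
      · omega
  -- conclude
  have hfinal := main (t-1) le_rfl
  have hzz : t - 1 - (t-1) = 0 := by omega
  rw [hzz] at hfinal
  have hR0 : {x ∈ I | KPTAux.DET I (0+1) id (KPTAux.cR f F 0) x = 0}
      = {x ∈ I | ∑ i ∈ Finset.range t, f i x = 0} := by
    ext x
    simp only [Set.mem_setOf_eq]
    have hdet1 : KPTAux.DET I (0+1) id (KPTAux.cR f F 0) x = F x := by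
      unfold KPTAux.DET
      rw [Matrix.det_fin_one]
      simp only [Matrix.of_apply, id_eq]
      have h00 : KPTAux.cR f F 0 ((0 : Fin 1) : ℕ) = F := by
        unfold KPTAux.cR
        simp
      rw [h00]
      show iteratedDerivWithin 0 F I x = F x
      simp
    rw [hdet1]
  rw [hR0] at hfinal
  refine ⟨hfinal.1, ?_⟩
  have hb := hfinal.2
  have ht1 : t - (t-1) = 1 := by omega
  rw [ht1] at hb
  -- sums
  have hsumA : ∑ j ∈ Finset.Icc 1 (t-1), {x ∈ I | W j x = 0}.ncard
      = {x ∈ I | W (t-1) x = 0}.ncard + ∑ j ∈ Finset.Icc 1 (t-2), {x ∈ I | W j x = 0}.ncard := by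
    have hins : Finset.Icc 1 (t-1) = insert (t-1) (Finset.Icc 1 (t-2)) := by
      ext a
      simp only [Finset.mem_Icc, Finset.mem_insert]
      omega
    rw [hins, Finset.sum_insert (by simp only [Finset.mem_Icc]; omega)]
  have hsumB : ∑ j ∈ Finset.Icc 0 (t-2), {x ∈ I | W j x = 0}.ncard
      = {x ∈ I | W 0 x = 0}.ncard + ∑ j ∈ Finset.Icc 1 (t-2), {x ∈ I | W j x = 0}.ncard := by
    have hins : Finset.Icc 0 (t-2) = insert 0 (Finset.Icc 1 (t-2)) := by
      ext a
      simp only [Finset.mem_Icc, Finset.mem_insert]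
      omega
    rw [hins, Finset.sum_insert (by simp only [Finset.mem_Icc]; omega)]
  have hW0 : {x ∈ I | W 0 x = 0}.ncard = 0 := by
    have : {x ∈ I | W 0 x = 0} = ∅ := by
      ext x
      simp only [Set.mem_setOf_eq, Set.mem_empty_iff_false, iff_false, not_and]
      intro _
      rw [hW 0]
      simp only []
      rw [Matrix.det_fin_zero]
      norm_num
    rw [this, Set.ncard_empty]
  rw [hsumA, hsumB, hW0] at hb
  omega
end

section
/- Let F ∈ ℝ[X,Y] be a bivariate polynomial of total degree d. For integers a, b ≥ 0 write F_{X^a Y^b} for the mixed partial derivative ∂^{a+b}F/∂X^a∂Y^b, and F_Y = F_{X^0Y^1}. For every integer k ≥ 1 there exists a polynomial S_k, in the C(k+2,2) − 1 variables indexed by the pairs (a,b) of natural numbers with 1 ≤ a + b ≤ k, of total degree at most 2k − 1 (and depending only on k and F), with the following property: for every open interval I ⊆ ℝ and every infinitely differentiable function φ : I → ℝ such that F(x, φ(x)) = 0 and F_Y(x, φ(x)) ≠ 0 for all x ∈ I, one has for all x ∈ I: φ^{(k)}(x) = S_k( (F_{X^aY^b}(x, φ(x)))_{1 ≤ a+b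 ≤ k} ) / (F_Y(x, φ(x)))^{2k−1}. -/
open MvPolynomial

/-- The iterated partial derivative `∂^{a+b} F / ∂X^a ∂Y^b` of a bivariate polynomial
(variable `0` plays the role of `X` and variable `1` that of `Y`). -/
noncomputable def mixedPderiv (a b : ℕ) (F : MvPolynomial (Fin 2) ℝ) :
    MvPolynomial (Fin 2) ℝ :=
  (pderiv (0 : Fin 2))^[a] ((pderiv (1 : Fin 2))^[b] F)

/-! ### Auxiliary algebraic lemmas -/

theorem pderiv_comm' {σ : Type*} {R : Type*} [CommRing R] (i j : σ) (p : MvPolynomial σ R) :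
    pderiv i (pderiv j p) = pderiv j (pderiv i p) := by
  classical
  induction p using MvPolynomial.induction_on with
  | C a => simp [pderiv_C]
  | add p q hp hq => simp [hp, hq]
  | mul_X p s ih =>
    have hX : ∀ a b : σ, pderiv a (pderiv b (X (R := R) s)) = 0 := by
      intro a b
      rcases eq_or_ne b s with rfl | h
      · simp [pderiv_one]
      · simp [h]
    simp only [pderiv_mul, map_add, pderiv_mul, ih, hX]
    ring

theorem totalDegree_pderiv_le' {σ : Type*} {R : Type*} [CommRing R] (i : σ)
    (p : MvPolynomial σ R) :
    (pderiv i p).totalDegree ≤ p.totalDegree - 1 := by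
  classical
  conv_lhs => rw [p.as_sum, map_sum]
  refine (totalDegree_finset_sum _ _).trans (Finset.sup_le fun s hs => ?_)
  rw [pderiv_monomial]
  rcases Nat.eq_zero_or_pos (s i) with h0 | h1
  · simp [h0]
  · refine (totalDegree_monomial_le _ _).trans ?_
    have hsub : (Finsupp.single i 1) ≤ s := by
      intro a
      rcases eq_or_ne a i with rfl | ha
      · simpa using Nat.succ_le_of_lt h1
      · simp [Finsupp.single_apply_eq_zero, ha.symm]
    have hsum : (s - Finsupp.single i 1).sum (fun _ n => n) + (Finsupp.single i 1).sum (fun _ n => n)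
        = s.sum (fun _ n => n) := by
      rw [← Finsupp.sum_add_index' (fun _ => rfl) (fun _ _ _ => rfl), tsub_add_cancel_of_le hsub]
    have h2 : s.sum (fun _ n => n) ≤ p.totalDegree := le_totalDegree hs
    simp only [Finsupp.sum_single_index] at hsum
    simp only [Finsupp.sum, id_eq] at hsum h2 ⊢
    omega

theorem mixedPderiv_one_zero (F : MvPolynomial (Fin 2) ℝ) :
    mixedPderiv 1 0 F = pderiv 0 F := rfl

theorem mixedPderiv_zero_one (F : MvPolynomial (Fin 2) ℝ) :
    mixedPderiv 0 1 F = pderiv 1 F := rfl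

theorem pderiv_zero_mixedPderiv (a b : ℕ) (F : MvPolynomial (Fin 2) ℝ) :
    pderiv 0 (mixedPderiv a b F) = mixedPderiv (a + 1) b F := by
  simp [mixedPderiv, Function.iterate_succ_apply']

theorem pderiv_one_mixedPderiv (a b : ℕ) (F : MvPolynomial (Fin 2) ℝ) :
    pderiv 1 (mixedPderiv a b F) = mixedPderiv a (b + 1) F := by
  induction a with
  | zero => simp [mixedPderiv, Function.iterate_succ_apply']
  | succ n ih =>
    simp only [mixedPderiv, Function.iterate_succ_apply'] at ih ⊢
    rw [pderiv_comm', ih]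

/-! ### The index type -/

abbrev Idx (k : ℕ) : Type := {ab : ℕ × ℕ // 1 ≤ ab.1 + ab.2 ∧ ab.1 + ab.2 ≤ k}

instance idxFinite (k : ℕ) : Finite (Idx k) := by
  refine Finite.of_injective (fun v : Idx k =>
    ((⟨v.1.1, by have := v.2.2; omega⟩ : Fin (k+1)),
      (⟨v.1.2, by have := v.2.2; omega⟩ : Fin (k+1)))) ?_
  rintro ⟨⟨a, b⟩, _⟩ ⟨⟨c, d⟩, _⟩ h
  simp only [Prod.mk.injEq, Fin.mk.injEq] at h
  simp [h.1, h.2]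

noncomputable instance idxFintype (k : ℕ) : Fintype (Idx k) := Fintype.ofFinite _

def embIdx (j : ℕ) (v : Idx (j + 1)) : Idx (j + 2) :=
  ⟨v.1, ⟨v.2.1, by have := v.2.2; omega⟩⟩

def incXIdx (j : ℕ) (v : Idx (j + 1)) : Idx (j + 2) :=
  ⟨(v.1.1 + 1, v.1.2), by have := v.2.2; constructor <;> omega⟩

def incYIdx (j : ℕ) (v : Idx (j + 1)) : Idx (j + 2) :=
  ⟨(v.1.1, v.1.2 + 1), by have := v.2.2; constructor <;> omega⟩

/-! ### Analytic lemmas -/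

theorem hasDerivAt_eval_poly {σ : Type*} [Fintype σ] [DecidableEq σ] (S : MvPolynomial σ ℝ)
    (c : ℝ → σ → ℝ) (c' : σ → ℝ) (x : ℝ)
    (h : ∀ v, HasDerivAt (fun t => c t v) (c' v) x) :
    HasDerivAt (fun t => eval (c t) S) (∑ v, eval (c x) (pderiv v S) * c' v) x := by
  induction S using MvPolynomial.induction_on with
  | C a =>
    simp only [eval_C, pderiv_C, map_zero, zero_mul, Finset.sum_const_zero]
    exact hasDerivAt_const x a
  | add p q hp hq =>
    simp only [eval_add, map_add, add_mul, Finset.sum_add_distrib]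
    exact hp.add hq
  | mul_X p s ih =>
    have H := ih.mul (h s)
    have hfun : (fun t => eval (c t) (p * X s)) = fun t => eval (c t) p * c t s := by
      funext t; simp
    rw [hfun]
    refine H.congr_deriv (Eq.symm ?_)
    rw [Finset.sum_mul]
    have key : ∀ v, eval (c x) (pderiv v (p * X s)) * c' v =
        eval (c x) (pderiv v p) * c' v * c x s + (if v = s then eval (c x) p * c' v else 0) := by
      intro v
      rcases eq_or_ne v s with rfl | hv
      · simp [pderiv_mul]; ring
      · simp [pderiv_mul, pderiv_X_of_ne hv.symm, hv]; ring
    rw [Finset.sum_congr rfl (fun v _ => key v), Finset.sum_add_distrib,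
      Finset.sum_ite_eq' Finset.univ s]
    simp

theorem hasDerivAt_eval_curve (F : MvPolynomial (Fin 2) ℝ) (φ : ℝ → ℝ) (y x : ℝ)
    (hφ : HasDerivAt φ y x) :
    HasDerivAt (fun t => eval ![t, φ t] F)
      (eval ![x, φ x] (pderiv 0 F) + eval ![x, φ x] (pderiv 1 F) * y) x := by
  have h := hasDerivAt_eval_poly F (fun t => ![t, φ t]) ![1, y] x ?_
  · convert h using 1
    rw [Fin.sum_univ_two]
    simp
  · intro v
    fin_cases v
    · simpa using hasDerivAt_id' x
    · simpa using hφ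

theorem implicit_hasDerivAt (F : MvPolynomial (Fin 2) ℝ) (I : Set ℝ) (hI : IsOpen I)
    (φ : ℝ → ℝ) (hφ : ContDiffOn ℝ (⊤ : ℕ∞) φ I)
    (h0 : ∀ x ∈ I, eval ![x, φ x] F = 0) (x : ℝ) (hx : x ∈ I)
    (hY : eval ![x, φ x] (pderiv 1 F) ≠ 0) :
    HasDerivAt φ
      (-(eval ![x, φ x] (pderiv 0 F)) / eval ![x, φ x] (pderiv 1 F)) x := by
  have hd : DifferentiableAt ℝ φ x :=
    (hφ.contDiffAt (hI.mem_nhds hx)).differentiableAt (by simp)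
  have h1 := hasDerivAt_eval_curve F φ (deriv φ x) x hd.hasDerivAt
  have h2 : (fun t => eval ![t, φ t] F) =ᶠ[nhds x] fun _ => (0 : ℝ) :=
    Filter.eventuallyEq_of_mem (hI.mem_nhds hx) h0
  have h3 : HasDerivAt (fun t => eval ![t, φ t] F) 0 x :=
    (hasDerivAt_const x (0 : ℝ)).congr_of_eventuallyEq h2
  have h4 := h1.unique h3
  have h5 : deriv φ x = -(eval ![x, φ x] (pderiv 0 F)) / eval ![x, φ x] (pderiv 1 F) := by
    field_simp
    linarith
  exact h5 ▸ hd.hasDerivAt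

theorem final_algebra (j : ℕ) (A B N E11 E02 fX fY : ℝ) (hfY : fY ≠ 0) :
    ((A + B * (-fX / fY)) * fY ^ (2*j+1) -
        N * (((2*j+1 : ℕ) : ℝ) * fY ^ (2*j) * (E11 + E02 * (-fX / fY)))) / (fY ^ (2*j+1)) ^ 2
      = (fY * (A * fY - B * fX) - ((2*j+1 : ℕ) : ℝ) * N * (E11 * fY - E02 * fX)) / fY ^ (2*j+3) := by
  have h1 : fY ^ (2*j+1) ≠ 0 := pow_ne_zero _ hfY
  have h3 : fY ^ (2*j+3) ≠ 0 := pow_ne_zero _ hfY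
  field_simp
  ring

/-! ### The main induction -/

theorem aux_main (F : MvPolynomial (Fin 2) ℝ) (j : ℕ) :
    ∃ S : MvPolynomial (Idx (j+1)) ℝ,
      S.totalDegree ≤ 2*j+1 ∧
      ∀ (I : Set ℝ), IsOpen I →
        ∀ φ : ℝ → ℝ, ContDiffOn ℝ (⊤ : ℕ∞) φ I →
          (∀ x ∈ I, eval ![x, φ x] F = 0) →
          (∀ x ∈ I, eval ![x, φ x] (pderiv (1 : Fin 2) F) ≠ 0) →
          ∀ x ∈ I,
            iteratedDerivWithin (j+1) φ I x =
              eval (fun v : Idx (j+1) => eval ![x, φ x] (mixedPderiv v.1.1 v.1.2 F)) S /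
                (eval ![x, φ x] (pderiv (1 : Fin 2) F)) ^ (2*j+1) := by
  induction j with
  | zero =>
    refine ⟨-X ⟨(1,0), by omega⟩, ?_, ?_⟩
    · rw [totalDegree_neg, totalDegree_X]
    · intro I hI φ hφ h0 hY x hx
      rw [iteratedDerivWithin_one, derivWithin_of_isOpen hI hx,
        (implicit_hasDerivAt F I hI φ hφ h0 x hx (hY x hx)).deriv]
      simp [mixedPderiv_one_zero, neg_div]
  | succ j IH =>
    obtain ⟨S, hdeg, hS⟩ := IH
    classical
    refine ⟨X (⟨(0,1), by omega⟩ : Idx (j+2)) * ∑ v : Idx (j+1), rename (embIdx j) (pderiv v S) *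
        (X (incXIdx j v) * X (⟨(0,1), by omega⟩ : Idx (j+2)) -
          X (incYIdx j v) * X (⟨(1,0), by omega⟩ : Idx (j+2)))
        - C ((2*j+1 : ℕ) : ℝ) * rename (embIdx j) S *
          (X (⟨(1,1), by omega⟩ : Idx (j+2)) * X (⟨(0,1), by omega⟩ : Idx (j+2)) -
            X (⟨(0,2), by omega⟩ : Idx (j+2)) * X (⟨(1,0), by omega⟩ : Idx (j+2))), ?_, ?_⟩
    · -- degree bound
      have hquad : ∀ u w u2 w2 : Idx (j+2),
          (X u * X w - X (R := ℝ) u2 * X w2).totalDegree ≤ 2 := by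
        intro u w u2 w2
        refine (totalDegree_sub _ _).trans (max_le ?_ ?_) <;>
          · refine (totalDegree_mul _ _).trans ?_
            simp [totalDegree_X]
      refine (totalDegree_sub _ _).trans (max_le ?_ ?_)
      · refine (totalDegree_mul _ _).trans ?_
        have h1 : (∑ v : Idx (j+1), rename (embIdx j) (pderiv v S) *
            (X (incXIdx j v) * X (⟨(0,1), by omega⟩ : Idx (j+2)) -
              X (incYIdx j v) * X (⟨(1,0), by omega⟩ : Idx (j+2)))).totalDegree ≤ 2*j+2 := by
          refine (totalDegree_finset_sum _ _).trans (Finset.sup_le fun v _ => ?_)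
          refine (totalDegree_mul _ _).trans ?_
          have ha := (totalDegree_rename_le (embIdx j) (pderiv v S)).trans
            (totalDegree_pderiv_le' v S)
          have hb := hquad (incXIdx j v) ⟨(0,1), by omega⟩ (incYIdx j v) ⟨(1,0), by omega⟩
          omega
        have h2 := totalDegree_X (R := ℝ) (⟨(0,1), by omega⟩ : Idx (j+2))
        omega
      · refine (totalDegree_mul _ _).trans ?_
        have h1 := totalDegree_mul (C ((2*j+1 : ℕ) : ℝ)) (rename (embIdx j) S)
        have h2 := (totalDegree_rename_le (embIdx j) S).trans hdeg
        have h3 := totalDegree_C (σ := Idx (j+2)) ((2*j+1 : ℕ) : ℝ)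
        have h4 := hquad ⟨(1,1), by omega⟩ ⟨(0,1), by omega⟩ ⟨(0,2), by omega⟩ ⟨(1,0), by omega⟩
        omega
    · -- the analytic statement
      intro I hI φ hφ h0 hY x hx
      have hYx := hY x hx
      have hφ' : HasDerivAt φ
          (-(eval ![x, φ x] (pderiv 0 F)) / eval ![x, φ x] (pderiv 1 F)) x :=
        implicit_hasDerivAt F I hI φ hφ h0 x hx hYx
      set y := -(eval ![x, φ x] (pderiv 0 F)) / eval ![x, φ x] (pderiv 1 F) with hy
      set c : ℝ → Idx (j+1) → ℝ := fun t v => eval ![t, φ t] (mixedPderiv v.1.1 v.1.2 F) with hc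
      have hcv : ∀ v : Idx (j+1), HasDerivAt (fun t => c t v)
          (eval ![x, φ x] (mixedPderiv (v.1.1+1) v.1.2 F)
            + eval ![x, φ x] (mixedPderiv v.1.1 (v.1.2+1) F) * y) x := by
        intro v
        have h := hasDerivAt_eval_curve (mixedPderiv v.1.1 v.1.2 F) φ y x hφ'
        rwa [pderiv_zero_mixedPderiv, pderiv_one_mixedPderiv] at h
      have hN : HasDerivAt (fun t => eval (c t) S)
          (∑ v : Idx (j+1), eval (c x) (pderiv v S) *
            (eval ![x, φ x] (mixedPderiv (v.1.1+1) v.1.2 F)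
              + eval ![x, φ x] (mixedPderiv v.1.1 (v.1.2+1) F) * y)) x :=
        hasDerivAt_eval_poly S c _ x hcv
      have hfYd : HasDerivAt (fun t => eval ![t, φ t] (pderiv (1 : Fin 2) F))
          (eval ![x, φ x] (mixedPderiv 1 1 F) + eval ![x, φ x] (mixedPderiv 0 2 F) * y) x := by
        have h := hasDerivAt_eval_curve (pderiv 1 F) φ y x hφ'
        rw [show pderiv (0 : Fin 2) (pderiv 1 F) = mixedPderiv 1 1 F from
            pderiv_zero_mixedPderiv 0 1 F,
          show pderiv (1 : Fin 2) (pderiv 1 F) = mixedPderiv 0 2 F from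
            pderiv_one_mixedPderiv 0 1 F] at h
        exact h
      have hD : HasDerivAt (fun t => (eval ![t, φ t] (pderiv (1 : Fin 2) F)) ^ (2*j+1))
          (((2*j+1 : ℕ) : ℝ) * (eval ![x, φ x] (pderiv (1 : Fin 2) F)) ^ (2*j) *
            (eval ![x, φ x] (mixedPderiv 1 1 F) + eval ![x, φ x] (mixedPderiv 0 2 F) * y)) x := by
        have h := hfYd.pow (2*j+1)
        rw [show 2*j+1-1 = 2*j from rfl] at h
        exact h
      have hg := hN.fun_div hD (pow_ne_zero _ hYx)
      have hiter : iteratedDerivWithin (j+1+1) φ I x =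
          deriv (iteratedDerivWithin (j+1) φ I) x := by
        rw [iteratedDerivWithin_succ, derivWithin_of_isOpen hI hx]
      have hEq : iteratedDerivWithin (j+1) φ I =ᶠ[nhds x] fun t =>
          eval (c t) S / (eval ![t, φ t] (pderiv (1 : Fin 2) F)) ^ (2*j+1) :=
        Filter.eventuallyEq_of_mem (hI.mem_nhds hx) (fun t ht => hS I hI φ hφ h0 hY t ht)
      have hexp : 2*(j+1)+1 = 2*j+3 := by ring
      rw [hiter]
      rw [hEq.deriv_eq]
      rw [hg.deriv]
      rw [hexp]
      -- now pure algebra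
      have hsplit1 : (∑ v : Idx (j+1), eval (c x) (pderiv v S) *
            (eval ![x, φ x] (mixedPderiv (v.1.1+1) v.1.2 F)
              + eval ![x, φ x] (mixedPderiv v.1.1 (v.1.2+1) F) * y))
          = (∑ v : Idx (j+1), eval (c x) (pderiv v S) *
              eval ![x, φ x] (mixedPderiv (v.1.1+1) v.1.2 F))
            + (∑ v : Idx (j+1), eval (c x) (pderiv v S) *
              eval ![x, φ x] (mixedPderiv v.1.1 (v.1.2+1) F)) * y := by
        simp only [mul_add, ← mul_assoc, Finset.sum_add_distrib, ← Finset.sum_mul]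
      have hWS : eval (fun v : Idx (j+2) => eval ![x, φ x] (mixedPderiv v.1.1 v.1.2 F))
            (X (⟨(0,1), by omega⟩ : Idx (j+2)) * ∑ v : Idx (j+1), rename (embIdx j) (pderiv v S) *
              (X (incXIdx j v) * X (⟨(0,1), by omega⟩ : Idx (j+2)) -
                X (incYIdx j v) * X (⟨(1,0), by omega⟩ : Idx (j+2)))
              - C ((2*j+1 : ℕ) : ℝ) * rename (embIdx j) S *
                (X (⟨(1,1), by omega⟩ : Idx (j+2)) * X (⟨(0,1), by omega⟩ : Idx (j+2)) -
                  X (⟨(0,2), by omega⟩ : Idx (j+2)) * X (⟨(1,0), by omega⟩ : Idx (j+2))))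
          = eval ![x, φ x] (pderiv (1 : Fin 2) F) *
              ((∑ v : Idx (j+1), eval (c x) (pderiv v S) *
                  eval ![x, φ x] (mixedPderiv (v.1.1+1) v.1.2 F)) *
                  eval ![x, φ x] (pderiv (1 : Fin 2) F)
                - (∑ v : Idx (j+1), eval (c x) (pderiv v S) *
                  eval ![x, φ x] (mixedPderiv v.1.1 (v.1.2+1) F)) *
                  eval ![x, φ x] (pderiv (0 : Fin 2) F))
            - ((2*j+1 : ℕ) : ℝ) * eval (c x) S *
              (eval ![x, φ x] (mixedPderiv 1 1 F) * eval ![x, φ x] (pderiv (1 : Fin 2) F)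
                - eval ![x, φ x] (mixedPderiv 0 2 F) * eval ![x, φ x] (pderiv (0 : Fin 2) F)) := by
        simp only [map_sub, map_mul, map_sum, eval_X, eval_C, eval_rename]
        have hterm : ∀ v : Idx (j+1),
            eval ((fun w : Idx (j+2) => eval ![x, φ x] (mixedPderiv w.1.1 w.1.2 F)) ∘ embIdx j)
              (pderiv v S) *
              (eval ![x, φ x] (mixedPderiv (incXIdx j v).1.1 (incXIdx j v).1.2 F) *
                  eval ![x, φ x] (mixedPderiv 0 1 F)
                - eval ![x, φ x] (mixedPderiv (incYIdx j v).1.1 (incYIdx j v).1.2 F) *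
                  eval ![x, φ x] (mixedPderiv 1 0 F))
            = eval (c x) (pderiv v S) *
                (eval ![x, φ x] (mixedPderiv (v.1.1+1) v.1.2 F) *
                  eval ![x, φ x] (pderiv (1 : Fin 2) F))
              - eval (c x) (pderiv v S) *
                (eval ![x, φ x] (mixedPderiv v.1.1 (v.1.2+1) F) *
                  eval ![x, φ x] (pderiv (0 : Fin 2) F)) := by
          intro v
          rw [mul_sub]
          rfl
        rw [Finset.sum_congr rfl (fun v _ => hterm v), Finset.sum_sub_distrib]
        simp only [← mul_assoc, ← Finset.sum_mul]
        rw [show (fun w : Idx (j+2) => eval ![x, φ x] (mixedPderiv w.1.1 w.1.2 F)) ∘ embIdx j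
            = c x from rfl]
        ring_nf
        simp only [mixedPderiv_zero_one, mixedPderiv_one_zero]
        ring
      rw [hsplit1, hWS]
      exact final_algebra j _ _ _ _ _ _ _ hYx

/-- **Derivatives of an algebraic function (Lemma 3).**
Let `F ∈ ℝ[X,Y]` and `k ≥ 1`.  There is a polynomial `S_k` of total degree at most
`2k - 1` in the `C(k+2,2) - 1` variables indexed by pairs `(a,b)` with `1 ≤ a+b ≤ k`
(depending only on `k` and `F`), such that for every open interval `I` and every `C^∞`
implicit function `φ : I → ℝ` with `F(x, φ(x)) = 0` and `F_Y(x, φ(x)) ≠ 0` on `I`: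
`φ^{(k)}(x) = S_k((F_{X^aY^b}(x, φ(x)))_{1 ≤ a+b ≤ k}) / (F_Y(x, φ(x)))^{2k-1}`. -/
theorem iteratedDeriv_implicit_eq_poly_div_pow
    (F : MvPolynomial (Fin 2) ℝ) (d : ℕ) (hd : F.totalDegree = d)
    (k : ℕ) (hk : 1 ≤ k) :
    ∃ S : MvPolynomial {ab : ℕ × ℕ // 1 ≤ ab.1 + ab.2 ∧ ab.1 + ab.2 ≤ k} ℝ,
      S.totalDegree ≤ 2 * k - 1 ∧
      ∀ (I : Set ℝ), IsOpen I →
        ∀ φ : ℝ → ℝ, ContDiffOn ℝ (⊤ : ℕ∞) φ I →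
          (∀ x ∈ I, eval ![x, φ x] F = 0) →
          (∀ x ∈ I, eval ![x, φ x] (pderiv (1 : Fin 2) F) ≠ 0) →
          ∀ x ∈ I,
            iteratedDerivWithin k φ I x =
              eval (fun v : {ab : ℕ × ℕ // 1 ≤ ab.1 + ab.2 ∧ ab.1 + ab.2 ≤ k} =>
                  eval ![x, φ x] (mixedPderiv v.1.1 v.1.2 F)) S /
                (eval ![x, φ x] (pderiv (1 : Fin 2) F)) ^ (2 * k - 1) := by
  obtain ⟨j, rfl⟩ : ∃ j, k = j + 1 := ⟨k - 1, by omega⟩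
  obtain ⟨S, hdeg, hS⟩ := aux_main F j
  refine ⟨S, ?_, ?_⟩
  · rw [show 2 * (j+1) - 1 = 2*j+1 by omega]
    exact hdeg
  · intro I hI φ hφ h0 hY x hx
    rw [show 2 * (j+1) - 1 = 2*j+1 by omega]
    exact hS I hI φ hφ h0 hY x hx
end

section
/- Let g ∈ ℂ[X,Y] be an irreducible bivariate polynomial of total degree d ≥ 1. Then the set of singular zeros of g in ℂ², i.e., the set {(x,y) ∈ ℂ² : g(x,y) = 0, ∂g/∂X(x,y) = 0, ∂g/∂Y(x,y) = 0}, is finite with at most d(d−1) elements. -/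
open MvPolynomial Finset

namespace BezoutAux

noncomputable section
set_option maxHeartbeats 1000000
set_option synthInstance.maxHeartbeats 400000

abbrev R2 := MvPolynomial (Fin 2) ℂ



lemma exists_max_mono {f : R2} (hf : f ≠ 0) :
    ∃ u ∈ f.support, (u.sum fun _ e => e) = f.totalDegree := by
  obtain ⟨u, hu, he⟩ := f.support.exists_mem_eq_sup
    (Finset.nonempty_iff_ne_empty.mpr (mt MvPolynomial.support_eq_empty.mp hf)) (fun m => m.sum fun _ e => e)
  exact ⟨u, hu, he.symm⟩

lemma top_component_ne_zero {f : R2} (hf : f ≠ 0) :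
    homogeneousComponent f.totalDegree f ≠ 0 := by
  obtain ⟨u, hu, he⟩ := exists_max_mono hf
  intro h0
  have := coeff_homogeneousComponent (φ := f) f.totalDegree u
  rw [h0] at this
  simp only [coeff_zero] at this
  rw [if_pos] at this
  · exact (mem_support_iff.mp hu) this.symm
  · exact he

lemma totalDegree_mul_eq {f g : R2} (hf : f ≠ 0) (hg : g ≠ 0) :
    (f * g).totalDegree = f.totalDegree + g.totalDegree := by
  refine le_antisymm (totalDegree_mul f g) ?_
  set a := f.totalDegree
  set b := g.totalDegree
  by_contra hlt
  push_neg at hlt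
  have hcomp : homogeneousComponent (a + b) (f * g) = 0 :=
    homogeneousComponent_eq_zero _ _ hlt
  have hkey : homogeneousComponent (a + b) (f * g)
      = homogeneousComponent a f * homogeneousComponent b g := by
    conv_lhs => rw [← sum_homogeneousComponent f, ← sum_homogeneousComponent g]
    rw [Finset.sum_mul_sum, map_sum]
    rw [Finset.sum_eq_single a]
    · rw [map_sum, Finset.sum_eq_single b]
      · have : ((homogeneousComponent a f) * (homogeneousComponent b g)).IsHomogeneous (a+b) :=
          (homogeneousComponent_isHomogeneous a f).mul (homogeneousComponent_isHomogeneous b g)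
        rw [homogeneousComponent_of_mem ((mem_homogeneousSubmodule _ _).mpr this), if_pos rfl]
      · intro j hj hja
        have : ((homogeneousComponent a f) * (homogeneousComponent j g)).IsHomogeneous (a+j) :=
          (homogeneousComponent_isHomogeneous a f).mul (homogeneousComponent_isHomogeneous j g)
        rw [homogeneousComponent_of_mem ((mem_homogeneousSubmodule _ _).mpr this), if_neg (by omega)]
      · intro hb; exact absurd (Finset.self_mem_range_succ b) hb
    · intro i hi hia
      rw [map_sum, Finset.sum_eq_zero]
      intro j hj
      have : ((homogeneousComponent i f) * (homogeneousComponent j g)).IsHomogeneous (i+j) :=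
        (homogeneousComponent_isHomogeneous i f).mul (homogeneousComponent_isHomogeneous j g)
      rw [homogeneousComponent_of_mem ((mem_homogeneousSubmodule _ _).mpr this), if_neg ?_]
      rw [Finset.mem_range] at hi hj
      omega
    · intro ha; exact absurd (Finset.self_mem_range_succ a) ha
  rw [hcomp] at hkey
  exact (mul_ne_zero (top_component_ne_zero hf) (top_component_ne_zero hg)) hkey.symm



lemma sum_fin2 (v : Fin 2 →₀ ℕ) : (v.sum fun _ e => e) = v 0 + v 1 := by
  rw [Finsupp.sum_fintype _ _ (fun _ => rfl)]
  exact Fin.sum_univ_two _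

lemma pderiv_totalDegree_le (i : Fin 2) (f : R2) :
    (pderiv i f).totalDegree ≤ f.totalDegree - 1 := by
  conv_lhs => rw [← support_sum_monomial_coeff f]
  rw [map_sum]
  refine (totalDegree_finset_sum _ _).trans (Finset.sup_le fun u hu => ?_)
  rw [pderiv_monomial]
  by_cases h : u i = 0
  · simp [h]
  · refine (totalDegree_monomial_le _ _).trans ?_
    have hle := le_totalDegree hu
    rw [sum_fin2] at hle
    refine le_trans (le_of_eq (sum_fin2 _)) ?_
    rw [Finsupp.tsub_apply, Finsupp.tsub_apply, Finsupp.single_apply, Finsupp.single_apply]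
    fin_cases i <;> simp_all <;> omega

lemma exists_pderiv_ne_zero {f : R2} (hdeg : 1 ≤ f.totalDegree) :
    ∃ i : Fin 2, pderiv i f ≠ 0 := by
  have hf : f ≠ 0 := by rintro rfl; simp at hdeg
  obtain ⟨u, hu, he⟩ := f.support.exists_mem_eq_sup
    (Finset.nonempty_iff_ne_empty.mpr (mt MvPolynomial.support_eq_empty.mp hf)) (fun m => m.sum fun _ e => e)
  have hsum : u 0 + u 1 = f.totalDegree := by rw [← sum_fin2, ← he]; rfl
  have hex : ∃ i : Fin 2, u i ≠ 0 := by
    by_contra hcon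
    push_neg at hcon
    have h0 := hcon 0; have h1 := hcon 1
    omega
  obtain ⟨i, hi⟩ := hex
  refine ⟨i, fun h0 => ?_⟩
  have hc : coeff (u - Finsupp.single i 1) (pderiv i f) = coeff u f * (u i : ℂ) := by
    conv_lhs => rw [← support_sum_monomial_coeff f, map_sum]
    rw [coeff_sum]
    rw [Finset.sum_eq_single u]
    · rw [pderiv_monomial, coeff_monomial, if_pos rfl]
    · intro v hv hvu
      rw [pderiv_monomial, coeff_monomial]
      by_cases hvi : v i = 0
      · simp [hvi]
      · have hne : ¬(v - Finsupp.single i 1 = u - Finsupp.single i 1) := by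
          intro heq
          apply hvu
          have hv' : v = (v - Finsupp.single i 1) + Finsupp.single i 1 := by
            ext j
            rcases eq_or_ne j i with rfl | hj
            · simp only [Finsupp.add_apply, Finsupp.tsub_apply, Finsupp.single_eq_same]
              omega
            · simp [Finsupp.add_apply, Finsupp.tsub_apply, Finsupp.single_eq_of_ne' (Ne.symm hj)]
          have hu' : u = (u - Finsupp.single i 1) + Finsupp.single i 1 := by
            ext j
            rcases eq_or_ne j i with rfl | hj
            · simp only [Finsupp.add_apply, Finsupp.tsub_apply, Finsupp.single_eq_same]
              omega
            · simp [Finsupp.add_apply, Finsupp.tsub_apply, Finsupp.single_eq_of_ne' (Ne.symm hj)]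
          rw [hv', hu', heq]
        rw [if_neg hne]
    · intro h; exact absurd hu h
  rw [h0, coeff_zero] at hc
  rcases mul_eq_zero.mp hc.symm with h | h
  · exact (mem_support_iff.mp hu) h
  · exact hi (Nat.cast_eq_zero.mp h)



def Es (s : ℕ) : Finset (Fin 2 →₀ ℕ) :=
  ((range (s+1)).biUnion (fun k : ℕ => Finset.HasAntidiagonal.antidiagonal k)).image
    (fun p => Finsupp.single 0 p.1 + Finsupp.single 1 p.2)

lemma mem_Es {s : ℕ} {u : Fin 2 →₀ ℕ} : u ∈ Es s ↔ u 0 + u 1 ≤ s := by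
  constructor
  · rintro hu
    simp only [Es, Finset.mem_image, Finset.mem_biUnion, Finset.mem_range,
      Finset.HasAntidiagonal.mem_antidiagonal] at hu
    obtain ⟨p, ⟨k, hk, hpk⟩, rfl⟩ := hu
    simp only [Finsupp.add_apply]
    rw [Finsupp.single_eq_same, Finsupp.single_eq_same,
      Finsupp.single_eq_of_ne' (by decide : (0:Fin 2) ≠ 1),
      Finsupp.single_eq_of_ne' (by decide : (1:Fin 2) ≠ 0)]
    omega
  · intro hu
    simp only [Es, Finset.mem_image, Finset.mem_biUnion, Finset.mem_range,
      Finset.HasAntidiagonal.mem_antidiagonal]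
    refine ⟨(u 0, u 1), ⟨u 0 + u 1, by omega, rfl⟩, ?_⟩
    ext j
    fin_cases j <;>
      simp [Finsupp.single_eq_of_ne' (by decide : (0:Fin 2) ≠ 1),
        Finsupp.single_eq_of_ne' (by decide : (1:Fin 2) ≠ 0)]

lemma card_Es (s : ℕ) : 2 * (Es s).card = (s+1) * (s+2) := by
  have hinj : Function.Injective (fun p : ℕ × ℕ => Finsupp.single (0 : Fin 2) p.1 + Finsupp.single 1 p.2) := by
    intro p q h
    have h0 := DFunLike.congr_fun h 0
    have h1 := DFunLike.congr_fun h 1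
    simp only [Finsupp.add_apply, Finsupp.single_eq_same,
      Finsupp.single_eq_of_ne' (by decide : (0:Fin 2) ≠ 1),
      Finsupp.single_eq_of_ne' (by decide : (1:Fin 2) ≠ 0)] at h0 h1
    ext <;> omega
  rw [Es, Finset.card_image_of_injective _ hinj]
  rw [Finset.card_biUnion]
  · simp only [Nat.card_antidiagonal]
    have : ∑ k ∈ range (s+1), (k+1) = ∑ k ∈ range (s+2), k := by
      rw [Finset.sum_range_succ' (fun k => k) (s+1)]
      simp
    rw [this]
    have h := Finset.sum_range_id_mul_two (s+2)
    rw [show s + 2 - 1 = s + 1 by omega] at h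
    rw [mul_comm 2 _, h, mul_comm]
  · intro x _ y _ hxy
    simp only [Finset.disjoint_left, Finset.HasAntidiagonal.mem_antidiagonal]
    intro a ha hb
    exact hxy (by omega)

abbrev V (s : ℕ) : Submodule ℂ R2 := restrictTotalDegree (Fin 2) ℂ s

lemma mem_V {s : ℕ} {p : R2} : p ∈ V s ↔ p.totalDegree ≤ s :=
  mem_restrictTotalDegree _ _ _

lemma V_eq_span (s : ℕ) :
    V s = Submodule.span ℂ (Set.range fun u : {u // u ∈ Es s} => (monomial u.1 (1:ℂ) : R2)) := by
  apply le_antisymm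
  · intro p hp
    rw [mem_V] at hp
    rw [← support_sum_monomial_coeff p]
    refine Submodule.sum_mem _ fun u hu => ?_
    have : (monomial u) (coeff u p) = (coeff u p) • (monomial u (1:ℂ)) := by
      rw [smul_monomial, smul_eq_mul, mul_one]
    rw [this]
    refine Submodule.smul_mem _ _ (Submodule.subset_span ?_)
    have hle : u 0 + u 1 ≤ s := by
      have := le_totalDegree hu
      rw [sum_fin2] at this
      omega
    exact ⟨⟨u, mem_Es.mpr hle⟩, rfl⟩
  · rw [Submodule.span_le]
    rintro x ⟨⟨u, hu⟩, rfl⟩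
    rw [SetLike.mem_coe, mem_V]
    refine (totalDegree_monomial_le _ _).trans ?_
    have := mem_Es.mp hu
    refine le_trans (le_of_eq (sum_fin2 u)) (by omega)

lemma finrank_V (s : ℕ) : 2 * Module.finrank ℂ (V s) = (s+1) * (s+2) := by
  have hli : LinearIndependent ℂ (fun u : {u // u ∈ Es s} => (monomial u.1 (1:ℂ) : R2)) := by
    have hb := (basisMonomials (Fin 2) ℂ).linearIndependent
    have := hb.comp (fun u : {u // u ∈ Es s} => u.1) Subtype.val_injective
    rw [coe_basisMonomials] at this
    exact this
  rw [V_eq_span, finrank_span_eq_card hli, Fintype.card_coe]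
  exact card_Es s


set_option maxHeartbeats 1000000
set_option synthInstance.maxHeartbeats 400000


/-- separating linear polynomial -/
def sep (a b : ℂ × ℂ) : R2 := if a.1 = b.1 then X 1 - C a.2 else X 0 - C a.1

lemma sep_totalDegree (a b : ℂ × ℂ) : (sep a b).totalDegree ≤ 1 := by
  have hX : ∀ (j : Fin 2) (c : ℂ), (X j - C c : R2).totalDegree ≤ 1 := by
    intro j c
    rw [sub_eq_add_neg, ← C_neg]
    refine (totalDegree_add _ _).trans ?_
    simp [totalDegree_X, totalDegree_C]
  unfold sep
  split <;> apply hX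

lemma sep_eval_self (a b : ℂ × ℂ) : eval ![a.1, a.2] (sep a b) = 0 := by
  unfold sep
  split <;> simp

lemma sep_eval_ne {a b : ℂ × ℂ} (hab : a ≠ b) : eval ![b.1, b.2] (sep a b) ≠ 0 := by
  unfold sep
  split
  · rename_i h1
    have h2 : a.2 ≠ b.2 := fun h2 => hab (Prod.ext h1 h2)
    simp [sub_eq_zero]
    exact fun hh => h2 hh.symm
  · rename_i h1
    simp [sub_eq_zero]
    exact fun hh => h1 hh.symm

theorem card_le_of_common_zeros (f h : R2) (hf0 : f ≠ 0) (hh0 : h ≠ 0)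
    (hpf : Prime f) (hnd : ¬ f ∣ h)
    (T : Finset (ℂ × ℂ)) (hT : ∀ p ∈ T, eval ![p.1, p.2] f = 0 ∧ eval ![p.1, p.2] h = 0) :
    T.card ≤ f.totalDegree * h.totalDegree := by
  set m := f.totalDegree with hm
  set n := h.totalDegree with hn
  set N := T.card with hN
  set s := m + n + N with hs
  -- the evaluation map
  let E : R2 →ₗ[ℂ] (T → ℂ) :=
    LinearMap.pi (fun t => (aeval ![(t : ℂ × ℂ).1, (t : ℂ × ℂ).2]).toLinearMap)
  have hE_apply : ∀ (p : R2) (t : T), E p t = eval ![(t : ℂ × ℂ).1, (t : ℂ × ℂ).2] p :=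
    fun p t => rfl
  let E' : V s →ₗ[ℂ] (T → ℂ) := E.comp (V s).subtype
  -- the multiplication submodules
  let M : Submodule ℂ R2 := (V (n + N)).map (LinearMap.mulLeft ℂ f)
  let Nn : Submodule ℂ R2 := (V (m + N)).map (LinearMap.mulLeft ℂ h)
  haveI hMfin : Module.Finite ℂ M := Module.Finite.map _ _
  haveI hNfin : Module.Finite ℂ Nn := Module.Finite.map _ _
  have hinjf : Function.Injective (LinearMap.mulLeft ℂ f) := fun x y hxy =>
    mul_left_cancel₀ hf0 hxy
  have hinjh : Function.Injective (LinearMap.mulLeft ℂ h) := fun x y hxy =>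
    mul_left_cancel₀ hh0 hxy
  have hinjfh : Function.Injective (LinearMap.mulLeft ℂ (f * h)) := fun x y hxy =>
    mul_left_cancel₀ (mul_ne_zero hf0 hh0) hxy
  have hfinrankM : Module.finrank ℂ M = Module.finrank ℂ (V (n + N)) :=
    ((Submodule.equivMapOfInjective _ hinjf (V (n + N))).symm).finrank_eq
  have hfinrankN : Module.finrank ℂ Nn = Module.finrank ℂ (V (m + N)) :=
    ((Submodule.equivMapOfInjective _ hinjh (V (m + N))).symm).finrank_eq
  -- intersection bound
  have hinf : M ⊓ Nn ≤ (V N).map (LinearMap.mulLeft ℂ (f * h)) := by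
    rintro x ⟨hxM, hxN⟩
    obtain ⟨a, ha, hax⟩ := hxM
    obtain ⟨b, hb, hbx⟩ := hxN
    rw [LinearMap.mulLeft_apply] at hax hbx
    by_cases hbz : b = 0
    · have hx0 : x = 0 := by rw [← hbx, hbz, mul_zero]
      rw [hx0]; exact Submodule.zero_mem _
    · have hdvd : f ∣ b := by
        rcases hpf.dvd_or_dvd ⟨a, hbx.trans hax.symm⟩ with h1 | h1
        · exact absurd h1 hnd
        · exact h1
      obtain ⟨c, rfl⟩ := hdvd
      have hcz : c ≠ 0 := fun hc => hbz (by rw [hc, mul_zero])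
      have hdm : (f * c).totalDegree = m + c.totalDegree := totalDegree_mul_eq hf0 hcz
      have hb' : (f * c).totalDegree ≤ m + N := mem_V.mp hb
      refine ⟨c, mem_V.mpr (by omega), ?_⟩
      rw [LinearMap.mulLeft_apply, ← hbx]
      ring
  have hfinrank_inf : Module.finrank ℂ (M ⊓ Nn : Submodule ℂ R2) ≤ Module.finrank ℂ (V N) := by
    haveI : Module.Finite ℂ ((V N).map (LinearMap.mulLeft ℂ (f * h))) := Module.Finite.map _ _
    refine (Submodule.finrank_mono hinf).trans ?_
    exact le_of_eq ((Submodule.equivMapOfInjective _ hinjfh (V N)).symm.finrank_eq)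
  -- sup inside V s and inside ker E
  have hMV : M ≤ V s := by
    rintro x ⟨a, ha, rfl⟩
    rw [mem_V]
    refine (totalDegree_mul _ _).trans ?_
    have hha : a.totalDegree ≤ n + N := mem_V.mp ha
    omega
  have hNV : Nn ≤ V s := by
    rintro x ⟨b, hb, rfl⟩
    rw [mem_V]
    refine (totalDegree_mul _ _).trans ?_
    have hhb : b.totalDegree ≤ m + N := mem_V.mp hb
    omega
  have hsupV : M ⊔ Nn ≤ V s := sup_le hMV hNV
  have hMker : M ≤ LinearMap.ker E := by
    rintro x ⟨a, ha, rfl⟩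
    rw [LinearMap.mem_ker]
    funext t
    rw [hE_apply, LinearMap.mulLeft_apply, eval_mul, (hT t t.2).1, zero_mul]
    simp
  have hNker : Nn ≤ LinearMap.ker E := by
    rintro x ⟨b, hb, rfl⟩
    rw [LinearMap.mem_ker]
    funext t
    rw [hE_apply, LinearMap.mulLeft_apply, eval_mul, (hT t t.2).2, zero_mul]
    simp
  have hsupker : M ⊔ Nn ≤ LinearMap.ker E := sup_le hMker hNker
  -- finrank of sup vs ker E'
  have hcomap : Submodule.comap (V s).subtype (M ⊔ Nn) ≤ LinearMap.ker E' := by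
    intro x hx
    rw [Submodule.mem_comap] at hx
    rw [LinearMap.mem_ker]
    exact hsupker hx
  have hfr_sup : Module.finrank ℂ (M ⊔ Nn : Submodule ℂ R2)
      ≤ Module.finrank ℂ (LinearMap.ker E') :=
    le_trans (le_of_eq (Submodule.comapSubtypeEquivOfLe hsupV).symm.finrank_eq)
      (Submodule.finrank_mono hcomap)
  -- surjectivity of E'
  have hrange : LinearMap.range E' = ⊤ := by
    rw [eq_top_iff]
    intro v _
    rw [pi_eq_sum_univ v]
    refine Submodule.sum_mem _ fun t0 _ => Submodule.smul_mem _ _ ?_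
    set q0 : R2 := ∏ t ∈ T.erase (t0 : ℂ × ℂ), sep t (t0 : ℂ × ℂ) with hq0
    have hq0deg : q0.totalDegree ≤ s := by
      refine (totalDegree_finset_prod _ _).trans ?_
      refine le_trans (Finset.sum_le_card_nsmul _ _ 1 (fun t _ => sep_totalDegree _ _)) ?_
      simp only [smul_eq_mul, mul_one]
      have hcard := Finset.card_erase_le (a := (t0 : ℂ × ℂ)) (s := T)
      omega
    have hq0t0 : eval ![(t0 : ℂ × ℂ).1, (t0 : ℂ × ℂ).2] q0 ≠ 0 := by
      rw [hq0, map_prod]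
      rw [Finset.prod_ne_zero_iff]
      intro t ht
      exact sep_eval_ne (fun he => (Finset.mem_erase.mp ht).1 he)
    have hq0t : ∀ t : T, (t : ℂ × ℂ) ≠ (t0 : ℂ × ℂ) →
        eval ![(t : ℂ × ℂ).1, (t : ℂ × ℂ).2] q0 = 0 := by
      intro t hne
      rw [hq0, map_prod]
      exact Finset.prod_eq_zero (Finset.mem_erase.mpr ⟨hne, t.2⟩) (sep_eval_self _ _)
    set c : ℂ := (eval ![(t0 : ℂ × ℂ).1, (t0 : ℂ × ℂ).2] q0)⁻¹ with hc
    refine ⟨⟨c • q0, Submodule.smul_mem _ _ (mem_V.mpr hq0deg)⟩, ?_⟩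
    funext t
    have happ : E' ⟨c • q0, Submodule.smul_mem _ _ (mem_V.mpr hq0deg)⟩ t
        = eval ![(t : ℂ × ℂ).1, (t : ℂ × ℂ).2] (c • q0) := rfl
    rw [happ, smul_eval]
    by_cases hte : t0 = t
    · subst hte
      rw [hc, inv_mul_cancel₀ hq0t0, if_pos rfl]
    · rw [hq0t t (fun hcc => hte (Subtype.ext hcc.symm)), mul_zero, if_neg hte]
  -- rank-nullity
  have hrn := LinearMap.finrank_range_add_finrank_ker E'
  rw [hrange, finrank_top] at hrn
  have hfr_pi : Module.finrank ℂ (T → ℂ) = N := by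
    rw [Module.finrank_pi]
    exact Fintype.card_coe T
  rw [hfr_pi] at hrn
  -- sup/inf dimension formula
  have hsupinf := Submodule.finrank_sup_add_finrank_inf_eq M Nn
  rw [hfinrankM, hfinrankN] at hsupinf
  -- put everything together
  have hDs := finrank_V s
  have hD1 := finrank_V (n + N)
  have hD2 := finrank_V (m + N)
  have hDN := finrank_V N
  rw [hs] at hDs
  nlinarith [hrn, hfr_sup, hsupinf, hfinrank_inf, hDs, hD1, hD2, hDN]

end
end BezoutAux

open BezoutAux in
/-- **Corollary 7.** If `g ∈ ℂ[X,Y]` is irreducible of total degree `d ≥ 1`, it has at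
most `d(d-1)` singular zeros in `ℂ²`, i.e. common zeros of `g`, `∂g/∂X` and `∂g/∂Y`. -/
theorem irreducible_singular_zeros_finite_card_le
    (g : MvPolynomial (Fin 2) ℂ) (hirr : Irreducible g)
    (d : ℕ) (hd : g.totalDegree = d) (hd1 : 1 ≤ d) :
    {p : ℂ × ℂ | eval ![p.1, p.2] g = 0 ∧
        eval ![p.1, p.2] (pderiv (0 : Fin 2) g) = 0 ∧
        eval ![p.1, p.2] (pderiv (1 : Fin 2) g) = 0}.Finite ∧
      {p : ℂ × ℂ | eval ![p.1, p.2] g = 0 ∧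
        eval ![p.1, p.2] (pderiv (0 : Fin 2) g) = 0 ∧
        eval ![p.1, p.2] (pderiv (1 : Fin 2) g) = 0}.ncard ≤ d * (d - 1) := by
  set S := {p : ℂ × ℂ | eval ![p.1, p.2] g = 0 ∧
      eval ![p.1, p.2] (pderiv (0 : Fin 2) g) = 0 ∧
      eval ![p.1, p.2] (pderiv (1 : Fin 2) g) = 0} with hS
  have hg0 : g ≠ 0 := hirr.ne_zero
  have hpg : Prime g := hirr.prime
  obtain ⟨i, hi⟩ := exists_pderiv_ne_zero (f := g) (by omega)
  set h : MvPolynomial (Fin 2) ℂ := pderiv i g with hh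
  have hhd : h.totalDegree ≤ d - 1 := by
    have h2 := pderiv_totalDegree_le i g
    rw [hd] at h2
    exact h2
  have hnd : ¬ g ∣ h := by
    rintro ⟨k, hk⟩
    have hk0 : k ≠ 0 := fun hk0 => hi (hk.trans (by rw [hk0, mul_zero]))
    have hmul := totalDegree_mul_eq hg0 hk0
    rw [hd] at hmul
    rw [hk, hmul] at hhd
    omega
  have hkey : ∀ T : Finset (ℂ × ℂ), ↑T ⊆ S → T.card ≤ d * (d - 1) := by
    intro T hTS
    have hT : ∀ p ∈ T, eval ![p.1, p.2] g = 0 ∧ eval ![p.1, p.2] h = 0 := by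
      intro p hp
      have := hTS hp
      rw [hS, Set.mem_setOf_eq] at this
      refine ⟨this.1, ?_⟩
      rw [hh]
      fin_cases i
      · exact this.2.1
      · exact this.2.2
    have := card_le_of_common_zeros g h hg0 hi hpg hnd T hT
    calc T.card ≤ g.totalDegree * h.totalDegree := this
      _ ≤ d * (d - 1) := by
          rw [hd]
          exact Nat.mul_le_mul_left d hhd
  have hfin : S.Finite := by
    by_contra hinf
    have hinf2 : S.Infinite := hinf
    obtain ⟨T, hTS, hTcard⟩ := hinf2.exists_subset_card_eq (d * (d - 1) + 1)
    have := hkey T hTS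
    omega
  refine ⟨hfin, ?_⟩
  rw [Set.ncard_eq_toFinset_card S hfin]
  exact hkey hfin.toFinset (by rw [Set.Finite.coe_toFinset])
end

section
/- Let F ∈ ℝ[X,Y] be a bivariate polynomial of total degree d ≥ 1 which is irreducible in ℝ[X,Y] and whose partial derivative F_Y = ∂F/∂Y is not the zero polynomial. Then the set {(x,y) ∈ ℝ² : F(x,y) = 0 and Res(F, F_Y)(x) = 0} is finite with at most 2d³ − d² elements, where Res(F, F_Y) ∈ ℝ[X] is the resultant of F and F_Y viewed as polynomials in Y over ℝ[X]. -/
open Polynomial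
open scoped Polynomial.Bivariate

/-- The Sylvester matrix of `A` and `B` (viewed as polynomials of degrees `m` and `n`):
the `(m+n) × (m+n)` matrix whose first `n` rows contain the coefficients of
`Y^{n-1}A, …, YA, A` and whose last `m` rows contain those of `Y^{m-1}B, …, YB, B`,
the coefficient of `Y^i` occurring in (1-indexed) column `m + n - i`. -/
noncomputable def sylvesterMatrix {R : Type*} [CommRing R] (A B : R[X]) (m n : ℕ) :
    Matrix (Fin (m + n)) (Fin (m + n)) R :=
  Matrix.of fun i j =>
    if (i : ℕ) < n then (X ^ (n - 1 - (i : ℕ)) * A).coeff (m + n - 1 - (j : ℕ))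
    else (X ^ (m + n - 1 - (i : ℕ)) * B).coeff (m + n - 1 - (j : ℕ))

/-- The resultant of two polynomials, as the determinant of their Sylvester matrix. -/
noncomputable def resultant {R : Type*} [CommRing R] (A B : R[X]) : R :=
  (sylvesterMatrix A B A.natDegree B.natDegree).det

/-- The total degree of a bivariate polynomial `F ∈ R[X][Y]`. -/
noncomputable def totalDeg {R : Type*} [CommRing R] (F : R[X][Y]) : ℕ :=
  F.support.sup fun i => i + (F.coeff i).natDegree

/-- Degree bound for determinants of polynomial matrices. -/
lemma my_natDegree_det_le {N : ℕ} {R : Type*} [CommRing R] (M : Matrix (Fin N) (Fin N) R[X])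
    {d : ℕ} (h : ∀ i j, (M i j).natDegree ≤ d) : M.det.natDegree ≤ N * d := by
  rw [Matrix.det_apply]
  refine natDegree_sum_le_of_forall_le _ _ (fun σ _ => ?_)
  have h1 : (Equiv.Perm.sign σ • ∏ i, M (σ i) i).natDegree ≤ (∏ i, M (σ i) i).natDegree := by
    rcases Int.units_eq_one_or (Equiv.Perm.sign σ) with hs | hs <;>
      simp [hs, Units.smul_def, natDegree_neg]
  refine h1.trans ((natDegree_prod_le _ _).trans ?_)
  calc ∑ i : Fin N, (M (σ i) i).natDegree ≤ ∑ _i : Fin N, d :=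
        Finset.sum_le_sum fun i _ => h _ _
    _ = N * d := by simp [Finset.sum_const, mul_comm]

lemma my_natDegree_pos (F : ℝ[X][Y]) (hFY : Polynomial.derivative F ≠ 0) :
    1 ≤ F.natDegree := by
  by_contra h
  push_neg at h
  have h0 : F.natDegree = 0 := by omega
  exact hFY (by rw [Polynomial.eq_C_of_natDegree_eq_zero h0, derivative_C])

/-- The resultant of an irreducible bivariate polynomial and its (nonzero) derivative
is nonzero. -/
lemma my_resultant_ne_zero (F : ℝ[X][Y]) (hirr : Irreducible F)
    (hFY : Polynomial.derivative F ≠ 0) :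
    _root_.resultant F (Polynomial.derivative F) ≠ 0 := by
  classical
  set B := Polynomial.derivative F with hB
  have hF0 : F ≠ 0 := hirr.ne_zero
  intro h0
  rw [_root_.resultant] at h0
  set m := F.natDegree with hm
  set n := B.natDegree with hn
  have hm1 : 1 ≤ m := my_natDegree_pos F hFY
  have hnm : n < m := natDegree_derivative_lt (by omega)
  obtain ⟨v, hv, hvM⟩ := Matrix.exists_vecMul_eq_zero_iff.mpr h0
  set W : Fin (m + n) → ℝ[X][Y] := fun i =>
    if (i : ℕ) < n then X ^ (n - 1 - (i : ℕ)) * F else X ^ (m + n - 1 - (i : ℕ)) * B with hW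
  set P : ℝ[X][Y] :=
    ∑ i : Fin (m + n), if (i : ℕ) < n then C (v i) * X ^ (n - 1 - (i : ℕ)) else 0 with hP
  set Q : ℝ[X][Y] :=
    ∑ i : Fin (m + n), if (i : ℕ) < n then 0 else C (v i) * X ^ (m + n - 1 - (i : ℕ)) with hQ
  have hWdeg : ∀ i : Fin (m + n), (W i).natDegree ≤ m + n - 1 := by
    intro i
    simp only [hW]
    split_ifs with hi
    · exact natDegree_mul_le.trans (by rw [natDegree_X_pow, ← hm]; omega)
    · push_neg at hi
      exact natDegree_mul_le.trans (by rw [natDegree_X_pow, ← hn]; omega)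
  have key : P * F + Q * B = ∑ i : Fin (m + n), C (v i) * W i := by
    rw [hP, hQ, Finset.sum_mul, Finset.sum_mul, ← Finset.sum_add_distrib]
    refine Finset.sum_congr rfl fun i _ => ?_
    simp only [hW]
    split_ifs with hi
    · rw [zero_mul, add_zero, mul_assoc]
    · rw [zero_mul, zero_add, mul_assoc]
  have hPQ : P * F + Q * B = 0 := by
    rw [key]
    refine Polynomial.ext fun k => ?_
    rw [finset_sum_coeff, coeff_zero]
    by_cases hk : k < m + n
    · set j : Fin (m + n) := ⟨m + n - 1 - k, by omega⟩ with hj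
      have hjk : m + n - 1 - (j : ℕ) = k := by
        simp only [hj]
        omega
      have h2 : ∀ i, (C (v i) * W i).coeff k =
          v i * sylvesterMatrix F B m n i j := by
        intro i
        rw [coeff_C_mul]
        simp only [hW, sylvesterMatrix, Matrix.of_apply]
        split_ifs with hi <;> rw [hjk]
      rw [Finset.sum_congr rfl fun i _ => h2 i]
      have := congrFun hvM j
      simpa [Matrix.vecMul, dotProduct] using this
    · refine Finset.sum_eq_zero fun i _ => ?_
      rw [coeff_C_mul, coeff_eq_zero_of_natDegree_lt ((hWdeg i).trans_lt (by omega)), mul_zero]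
  have hQ0 : Q = 0 := by
    by_contra hQ0
    have hdvd : F ∣ Q * B := ⟨-P, by linear_combination hPQ⟩
    have hprime : Prime F := hirr.prime
    rcases hprime.2.2 _ _ hdvd with h | h
    · have h1 : m ≤ Q.natDegree := natDegree_le_of_dvd h hQ0
      have hQdeg : Q.natDegree ≤ m - 1 := by
        rw [hQ]
        refine natDegree_sum_le_of_forall_le _ _ fun i _ => ?_
        split_ifs with hi
        · simp
        · push_neg at hi
          exact (natDegree_C_mul_X_pow_le _ _).trans (by omega)
      omega
    · have := natDegree_le_of_dvd h hFY
      omega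
  have hP0 : P = 0 := by
    rw [hQ0, zero_mul, add_zero] at hPQ
    exact (mul_eq_zero.mp hPQ).resolve_right hF0
  apply hv
  funext i₀
  by_cases hi₀ : (i₀ : ℕ) < n
  · have h : (∑ i : Fin (m + n),
        (if (i : ℕ) < n then C (v i) * X ^ (n - 1 - (i : ℕ)) else 0).coeff
          (n - 1 - (i₀ : ℕ))) = 0 := by
      rw [← finset_sum_coeff, ← hP, hP0, coeff_zero]
    rw [Finset.sum_eq_single i₀ ?_ (by simp)] at h
    · rw [if_pos hi₀, coeff_C_mul, coeff_X_pow, if_pos rfl, mul_one] at h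
      exact h
    · intro i _ hne
      split_ifs with hi
      · rw [coeff_C_mul, coeff_X_pow, if_neg, mul_zero]
        have hvne : (i : ℕ) ≠ (i₀ : ℕ) := fun hh => hne (Fin.ext hh)
        omega
      · exact coeff_zero _
  · have h : (∑ i : Fin (m + n),
        (if (i : ℕ) < n then 0 else C (v i) * X ^ (m + n - 1 - (i : ℕ))).coeff
          (m + n - 1 - (i₀ : ℕ))) = 0 := by
      rw [← finset_sum_coeff, ← hQ, hQ0, coeff_zero]
    rw [Finset.sum_eq_single i₀ ?_ (by simp)] at h
    · rw [if_neg hi₀, coeff_C_mul, coeff_X_pow, if_pos rfl, mul_one] at h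
      exact h
    · intro i _ hne
      split_ifs with hi
      · exact coeff_zero _
      · rw [coeff_C_mul, coeff_X_pow, if_neg, mul_zero]
        have hvne : (i : ℕ) ≠ (i₀ : ℕ) := fun hh => hne (Fin.ext hh)
        have h1 := i.isLt
        have h2 := i₀.isLt
        omega

/-- **Lemma (roots on the critical lines).** Let `F ∈ ℝ[X][Y] ≅ ℝ[X,Y]` be irreducible
of total degree `d ≥ 1` with `F_Y = ∂F/∂Y ≠ 0`.  Then the set of points `(x, y) ∈ ℝ²`
with `F(x,y) = 0` and `Res(F, F_Y)(x) = 0` is finite, of cardinality at most `2d³ - d²`. -/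
theorem card_zeros_on_resultant_lines_le
    (F : ℝ[X][Y]) (hirr : Irreducible F)
    (d : ℕ) (hd : totalDeg F = d) (hd1 : 1 ≤ d)
    (hFY : Polynomial.derivative F ≠ 0) :
    {p : ℝ × ℝ | F.evalEval p.1 p.2 = 0 ∧
        (_root_.resultant F (Polynomial.derivative F)).eval p.1 = 0}.Finite ∧
      {p : ℝ × ℝ | F.evalEval p.1 p.2 = 0 ∧
        (_root_.resultant F (Polynomial.derivative F)).eval p.1 = 0}.ncard ≤
        2 * d ^ 3 - d ^ 2 := by
  classical
  have hF0 : F ≠ 0 := hirr.ne_zero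
  set Res := _root_.resultant F (Polynomial.derivative F) with hRes
  have hRne : Res ≠ 0 := my_resultant_ne_zero F hirr hFY
  -- fiber polynomials are nonzero
  set g : ℝ → ℝ[X] := fun x => F.map (evalRingHom x) with hgdef
  have hg : ∀ x : ℝ, g x ≠ 0 := by
    intro x hzero
    have hdvd : C (X - Polynomial.C x) ∣ F := by
      rw [Polynomial.C_dvd_iff_dvd_coeff]
      intro i
      have hev : (F.coeff i).eval x = 0 := by
        have := congrArg (fun p : ℝ[X] => p.coeff i) hzero
        simpa [hgdef, coeff_map] using this
      exact dvd_iff_isRoot.mpr hev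
    obtain ⟨t, ht⟩ := hdvd
    rcases hirr.isUnit_or_isUnit ht with h | h
    · have : IsUnit (X - Polynomial.C x) := Polynomial.isUnit_C.mp h
      exact not_isUnit_of_natDegree_pos _ (by rw [natDegree_X_sub_C]; omega) this
    · obtain ⟨r, hr, hrt⟩ := Polynomial.isUnit_iff.mp h
      apply hFY
      rw [ht, ← hrt, ← C_mul, derivative_C]
  -- degree bounds
  have hmd : F.natDegree ≤ d := by
    rw [← hd, totalDeg]
    exact le_trans (Nat.le_add_right _ _)
      (Finset.le_sup (f := fun i => i + (F.coeff i).natDegree)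
        (natDegree_mem_support_of_nonzero hF0))
  have hcoeff : ∀ i, (F.coeff i).natDegree ≤ d := by
    intro i
    by_cases h : F.coeff i = 0
    · simp [h]
    · rw [← hd, totalDeg]
      exact le_trans (Nat.le_add_left _ _)
        (Finset.le_sup (f := fun i => i + (F.coeff i).natDegree) (mem_support_iff.mpr h))
  have hcoeffB : ∀ i, ((Polynomial.derivative F).coeff i).natDegree ≤ d := by
    intro i
    rw [coeff_derivative]
    refine natDegree_mul_le.trans ?_
    have h1 : (((i : ℝ[X])) + 1).natDegree = 0 := by
      rw [← Nat.cast_add_one, natDegree_natCast]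
    rw [h1, add_zero]
    exact hcoeff _
  have hm1 : 1 ≤ F.natDegree := my_natDegree_pos F hFY
  have hnm : (Polynomial.derivative F).natDegree < F.natDegree :=
    natDegree_derivative_lt (by omega)
  -- resultant degree bound
  have hent : ∀ i j, ((sylvesterMatrix F (Polynomial.derivative F) F.natDegree
      (Polynomial.derivative F).natDegree) i j).natDegree ≤ d := by
    intro i j
    rw [sylvesterMatrix, Matrix.of_apply]
    split_ifs with hi
    · rw [mul_comm, coeff_mul_X_pow']
      split_ifs
      · exact hcoeff _
      · simp
    · rw [mul_comm, coeff_mul_X_pow']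
      split_ifs
      · exact hcoeffB _
      · simp
  have hRdeg : Res.natDegree ≤ (2 * d - 1) * d := by
    rw [hRes, _root_.resultant]
    refine (my_natDegree_det_le _ hent).trans (Nat.mul_le_mul_right _ (by omega))
  -- the covering finset
  set t : Finset (ℝ × ℝ) := Res.roots.toFinset.biUnion
    (fun x => ((g x).roots.toFinset).image (fun y => (x, y))) with htdef
  have hsub : {p : ℝ × ℝ | F.evalEval p.1 p.2 = 0 ∧ Res.eval p.1 = 0} ⊆ ↑t := by
    rintro ⟨x, y⟩ ⟨h1, h2⟩
    have hx : x ∈ Res.roots.toFinset :=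
      Multiset.mem_toFinset.mpr (mem_roots'.mpr ⟨hRne, h2⟩)
    have hy : y ∈ (g x).roots.toFinset := by
      refine Multiset.mem_toFinset.mpr (mem_roots'.mpr ⟨hg x, ?_⟩)
      show (g x).eval y = 0
      rw [hgdef]
      rw [map_evalRingHom_eval]
      exact h1
    exact Finset.mem_coe.mpr (Finset.mem_biUnion.mpr
      ⟨x, hx, Finset.mem_image.mpr ⟨y, hy, rfl⟩⟩)
  have hfin : {p : ℝ × ℝ | F.evalEval p.1 p.2 = 0 ∧ Res.eval p.1 = 0}.Finite :=
    Set.Finite.subset t.finite_toSet hsub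
  refine ⟨hfin, ?_⟩
  have hcard1 : {p : ℝ × ℝ | F.evalEval p.1 p.2 = 0 ∧ Res.eval p.1 = 0}.ncard ≤ t.card := by
    have := Set.ncard_le_ncard hsub t.finite_toSet
    simpa [Set.ncard_coe_finset] using this
  have hgcard : ∀ x : ℝ, (g x).roots.toFinset.card ≤ d := fun x =>
    (Multiset.toFinset_card_le _).trans ((card_roots' _).trans
      (natDegree_map_le.trans hmd))
  have htcard : t.card ≤ Res.roots.toFinset.card * d := by
    rw [htdef]
    refine Finset.card_biUnion_le.trans ?_
    refine le_trans (Finset.sum_le_sum fun x _ =>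
      (Finset.card_image_le).trans (hgcard x)) ?_
    simp [Finset.sum_const, mul_comm]
  have hRroots : Res.roots.toFinset.card ≤ (2 * d - 1) * d :=
    (Multiset.toFinset_card_le _).trans ((card_roots' Res).trans hRdeg)
  have harith : (2 * d - 1) * d * d = 2 * d ^ 3 - d ^ 2 := by
    rw [Nat.sub_mul, Nat.sub_mul]
    congr 1 <;> ring
  calc {p : ℝ × ℝ | F.evalEval p.1 p.2 = 0 ∧ Res.eval p.1 = 0}.ncard
      ≤ t.card := hcard1
    _ ≤ Res.roots.toFinset.card * d := htcard
    _ ≤ (2 * d - 1) * d * d := Nat.mul_le_mul_right _ hRroots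
    _ = 2 * d ^ 3 - d ^ 2 := harith
end

section
/- Let h ∈ ℂ[X,Y] be an irreducible bivariate polynomial such that there exist no μ ∈ ℂ and r ∈ ℝ[X,Y] with h equal to μ times the image of r under the coefficient embedding ℝ → ℂ. Then the set of real zeros of h, i.e., {(x,y) ∈ ℝ² : h(x,y) = 0}, is finite with at most deg(h)² elements. -/
open MvPolynomial

namespace RealZerosAux

section DegreeMul

variable {R : Type*} [CommRing R] [IsDomain R] {σ : Type*}


variable {R : Type*} [CommRing R] [IsDomain R] {σ : Type*}

noncomputable def Φ : MvPolynomial σ R →ₐ[R] Polynomial (MvPolynomial σ R) :=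
  MvPolynomial.aeval (fun i => Polynomial.C (MvPolynomial.X i) * Polynomial.X)

theorem Φ_monomial (s : σ →₀ ℕ) (c : R) :
    Φ (monomial s c) =
      Polynomial.C (monomial s c) * Polynomial.X ^ (s.sum fun _ e => e) := by
  rw [MvPolynomial.monomial_eq, map_mul]
  have h1 : (Φ (MvPolynomial.C c) : Polynomial (MvPolynomial σ R)) = Polynomial.C (MvPolynomial.C c) := by
    simp [Φ, MvPolynomial.algebraMap_eq]
  have h2 : Φ (s.prod fun i e => (MvPolynomial.X i : MvPolynomial σ R) ^ e) =
      Polynomial.C (s.prod fun i e => (MvPolynomial.X i : MvPolynomial σ R) ^ e)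
        * Polynomial.X ^ (s.sum fun _ e => e) := by
    rw [map_finsuppProd]
    rw [Finsupp.prod, Finsupp.prod, Finsupp.sum]
    have : ∀ i ∈ s.support, Φ ((MvPolynomial.X i : MvPolynomial σ R) ^ s i)
        = Polynomial.C ((MvPolynomial.X i : MvPolynomial σ R) ^ s i) * Polynomial.X ^ s i := by
      intro i _
      rw [map_pow, show Φ (MvPolynomial.X i : MvPolynomial σ R)
          = Polynomial.C (MvPolynomial.X i) * Polynomial.X from MvPolynomial.aeval_X _ _,
        mul_pow, ← Polynomial.C_pow]
    rw [Finset.prod_congr rfl this, Finset.prod_mul_distrib, ← map_prod,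
      Finset.prod_pow_eq_pow_sum]
  rw [h1, h2, ← mul_assoc, ← Polynomial.C_mul]

theorem natDegree_Φ_le (f : MvPolynomial σ R) : (Φ f).natDegree ≤ f.totalDegree := by
  conv_lhs => rw [f.as_sum, map_sum]
  apply Polynomial.natDegree_sum_le_of_forall_le
  intro s hs
  rw [Φ_monomial]
  refine (Polynomial.natDegree_mul_le).trans ?_
  simp only [Polynomial.natDegree_C, Polynomial.natDegree_X_pow, zero_add]
  exact MvPolynomial.le_totalDegree hs

theorem coeff_Φ_totalDegree_ne_zero {f : MvPolynomial σ R} (hf : f ≠ 0) :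
    (Φ f).coeff f.totalDegree ≠ 0 := by
  classical
  obtain ⟨s₀, hs₀mem, hs₀⟩ := f.support.exists_mem_eq_sup (support_nonempty.mpr hf)
    (fun s => s.sum fun _ e => e)
  have key : MvPolynomial.coeff s₀ ((Φ f).coeff f.totalDegree) = f.coeff s₀ := by
    conv_lhs => rw [f.as_sum, map_sum, Polynomial.finset_sum_coeff]
    rw [MvPolynomial.coeff_sum]
    rw [Finset.sum_eq_single s₀]
    · rw [Φ_monomial, Polynomial.coeff_C_mul, Polynomial.coeff_X_pow, ← hs₀]
      simp [MvPolynomial.totalDegree, MvPolynomial.coeff_monomial]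
    · intro s hsmem hne
      rw [Φ_monomial, Polynomial.coeff_C_mul, Polynomial.coeff_X_pow]
      by_cases h : f.totalDegree = s.sum fun _ e => e <;>
        simp [h, MvPolynomial.coeff_monomial, hne, Ne.symm hne]
    · intro h; exact absurd hs₀mem h
  intro h
  rw [h] at key
  simp only [MvPolynomial.coeff_zero] at key
  exact MvPolynomial.mem_support_iff.mp hs₀mem key.symm

theorem Φ_ne_zero {f : MvPolynomial σ R} (hf : f ≠ 0) : Φ f ≠ 0 := fun h => by
  apply coeff_Φ_totalDegree_ne_zero hf
  rw [h]; simp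

theorem natDegree_Φ {f : MvPolynomial σ R} (hf : f ≠ 0) :
    (Φ f).natDegree = f.totalDegree :=
  le_antisymm (natDegree_Φ_le f)
    (Polynomial.le_natDegree_of_ne_zero (coeff_Φ_totalDegree_ne_zero hf))

theorem totalDegree_mul_eq {a b : MvPolynomial σ R} (ha : a ≠ 0) (hb : b ≠ 0) :
    (a * b).totalDegree = a.totalDegree + b.totalDegree := by
  rw [← natDegree_Φ (mul_ne_zero ha hb), map_mul,
    Polynomial.natDegree_mul (Φ_ne_zero ha) (Φ_ne_zero hb), natDegree_Φ ha, natDegree_Φ hb]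

theorem eq_C_of_totalDegree_eq_zero {f : MvPolynomial σ R} (h : f.totalDegree = 0) :
    f = MvPolynomial.C (f.coeff 0) := by
  classical
  ext m
  rw [MvPolynomial.totalDegree_eq_zero_iff] at h
  by_cases hm : m = 0
  · subst hm; simp
  · have hns : m ∉ f.support := fun hmem => hm (Finsupp.ext fun i => h m hmem i)
    rw [MvPolynomial.notMem_support_iff] at hns
    rw [hns, MvPolynomial.coeff_C, if_neg (Ne.symm hm)]

theorem eq_C_of_isUnit {f : MvPolynomial σ R} (hf : IsUnit f) :
    ∃ c : R, f = MvPolynomial.C c := by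
  obtain ⟨u, rfl⟩ := hf
  have h1 : (u : MvPolynomial σ R) * ((u⁻¹ : (MvPolynomial σ R)ˣ) : MvPolynomial σ R) = 1 :=
    u.mul_inv
  have hne : (u : MvPolynomial σ R) ≠ 0 := u.ne_zero
  have hne' : ((u⁻¹ : (MvPolynomial σ R)ˣ) : MvPolynomial σ R) ≠ 0 := Units.ne_zero _
  have hdeg : (u : MvPolynomial σ R).totalDegree = 0 := by
    have := congrArg MvPolynomial.totalDegree h1
    rw [totalDegree_mul_eq hne hne', MvPolynomial.totalDegree_one] at this
    omega
  exact ⟨(u : MvPolynomial σ R).coeff 0, eq_C_of_totalDegree_eq_zero hdeg⟩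


end DegreeMul


/-- number of monomials in two variables of total degree ≤ d -/
noncomputable def Nd (d : ℕ) : ℕ :=
  (((Finset.range (d+1)).biUnion fun k => Finset.HasAntidiagonal.antidiagonal k)).card

theorem mem_NdSet {d : ℕ} (ab : ℕ × ℕ) :
    ab ∈ ((Finset.range (d+1)).biUnion fun k => Finset.HasAntidiagonal.antidiagonal k) ↔
      ab.1 + ab.2 ≤ d := by
  simp only [Finset.mem_biUnion, Finset.mem_range, Finset.HasAntidiagonal.mem_antidiagonal]
  constructor
  · rintro ⟨k, hk, rfl⟩; omega
  · intro h; exact ⟨ab.1 + ab.2, by omega, rfl⟩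

theorem two_mul_Nd (d : ℕ) : 2 * Nd d = (d + 1) * (d + 2) := by
  have hdisj : ∀ x ∈ Finset.range (d+1), ∀ y ∈ Finset.range (d+1), x ≠ y →
      Disjoint (Finset.HasAntidiagonal.antidiagonal x) (Finset.HasAntidiagonal.antidiagonal y) := by
    intro x _ y _ hxy
    rw [Finset.disjoint_left]
    intro a hax hay
    rw [Finset.HasAntidiagonal.mem_antidiagonal] at hax hay
    exact hxy (hax ▸ hay ▸ rfl)
  have hcard : Nd d = ∑ k ∈ Finset.range (d+1), (k+1) := by
    rw [Nd, Finset.card_biUnion hdisj]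
    exact Finset.sum_congr rfl fun k _ => Finset.Nat.card_antidiagonal k
  rw [hcard, Finset.mul_sum]
  have : ∀ e : ℕ, ∑ k ∈ Finset.range (e+1), 2 * (k+1) = (e+1)*(e+2) := by
    intro e
    induction e with
    | zero => simp
    | succ n ih => rw [Finset.sum_range_succ, ih]; ring
  exact this d

theorem Nd_identity (m n s : ℕ) :
    Nd (m + n + s) + Nd s = Nd (m + s) + Nd (n + s) + m * n := by
  have h1 := two_mul_Nd (m + n + s)
  have h2 := two_mul_Nd s
  have h3 := two_mul_Nd (m + s)
  have h4 := two_mul_Nd (n + s)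
  nlinarith [h1, h2, h3, h4]

theorem finrank_restrictTotalDegree (d : ℕ) :
    Module.finrank ℝ (restrictTotalDegree (Fin 2) ℝ d) = Nd d := by
  have b := MvPolynomial.basisRestrictSupport ℝ
    {n : Fin 2 →₀ ℕ | (n.sum fun _ e => e) ≤ d}
  have hre : restrictTotalDegree (Fin 2) ℝ d
      = restrictSupport ℝ {n : Fin 2 →₀ ℕ | (n.sum fun _ e => e) ≤ d} := rfl
  rw [hre, Module.finrank_eq_nat_card_basis b]
  have e : {n : Fin 2 →₀ ℕ | (n.sum fun _ e => e) ≤ d} ≃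
      {ab : ℕ × ℕ | ab.1 + ab.2 ≤ d} := by
    refine Equiv.subtypeEquiv (Finsupp.equivFunOnFinite.trans (finTwoArrowEquiv ℕ)) ?_
    intro s
    have : (s.sum fun _ e => e) = s 0 + s 1 := by
      rw [Finsupp.sum_fintype _ _ (fun _ => rfl), Fin.sum_univ_two]
    simp [this, finTwoArrowEquiv, Finsupp.equivFunOnFinite]
  rw [Nat.card_congr e]
  have : {ab : ℕ × ℕ | ab.1 + ab.2 ≤ d} =
      ↑((Finset.range (d+1)).biUnion fun k => Finset.HasAntidiagonal.antidiagonal k) := by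
    ext ab; simp only [mem_NdSet, Set.mem_setOf_eq, Finset.coe_biUnion, Finset.mem_coe]
    rw [← mem_NdSet (d := d) ab]; simp
  rw [Nat.card_coe_set_eq, this, Set.ncard_coe_finset]
  rfl




set_option maxHeartbeats 1000000 in
set_option synthInstance.maxHeartbeats 200000 in
theorem count_le (p q : MvPolynomial (Fin 2) ℝ) (hp : p ≠ 0) (hq : q ≠ 0)
    (hco : IsRelPrime p q) (t : Finset (ℝ × ℝ))
    (hzp : ∀ z ∈ t, aeval ![z.1, z.2] p = 0) (hzq : ∀ z ∈ t, aeval ![z.1, z.2] q = 0) :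
    t.card ≤ p.totalDegree * q.totalDegree := by
  classical
  set m := p.totalDegree with hm
  set n := q.totalDegree with hn
  set s := t.card with hs
  set d := m + n + s with hd
  -- separating linear polynomials
  have hsep : ∀ z w : ℝ × ℝ, ∃ L : MvPolynomial (Fin 2) ℝ, L.totalDegree ≤ 1 ∧
      aeval ![w.1, w.2] L = 0 ∧ (z ≠ w → aeval ![z.1, z.2] L ≠ 0) := by
    intro z w
    by_cases h1 : z.1 = w.1
    · refine ⟨X 1 - C w.2, ?_, by simp, ?_⟩
      · refine (MvPolynomial.totalDegree_sub _ _).trans ?_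
        simp [MvPolynomial.totalDegree_X]
      · intro hzw
        have h2 : z.2 ≠ w.2 := fun h2 => hzw (Prod.ext h1 h2)
        simp [sub_ne_zero, h2]
    · refine ⟨X 0 - C w.1, ?_, by simp, ?_⟩
      · refine (MvPolynomial.totalDegree_sub _ _).trans ?_
        simp [MvPolynomial.totalDegree_X]
      · intro _; simp [sub_ne_zero, h1]
  choose L hLdeg hLw hLz using hsep
  -- the interpolation basis polynomials
  set fz : ℝ × ℝ → MvPolynomial (Fin 2) ℝ := fun z => ∏ w ∈ t.erase z, L z w with hfz
  have hfzdeg : ∀ z, (fz z).totalDegree ≤ s := by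
    intro z
    refine (MvPolynomial.totalDegree_finset_prod _ _).trans ?_
    calc ∑ w ∈ t.erase z, (L z w).totalDegree ≤ ∑ _w ∈ t.erase z, 1 :=
          Finset.sum_le_sum fun w _ => hLdeg z w
    _ = (t.erase z).card := by simp
    _ ≤ s := (Finset.card_erase_le).trans le_rfl
  have hfz_self : ∀ z ∈ t, aeval ![z.1, z.2] (fz z) ≠ 0 := by
    intro z _
    rw [hfz, map_prod]
    rw [Finset.prod_ne_zero_iff]
    intro w hw
    exact hLz z w (fun h => (Finset.ne_of_mem_erase hw) h.symm)
  have hfz_other : ∀ z u, u ∈ t → u ≠ z → aeval ![u.1, u.2] (fz z) = 0 := by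
    intro z u hu hne
    rw [hfz, map_prod]
    exact Finset.prod_eq_zero (Finset.mem_erase.mpr ⟨hne, hu⟩) (hLw z u)
  -- the evaluation linear map
  set E : MvPolynomial (Fin 2) ℝ →ₗ[ℝ] ({x // x ∈ t} → ℝ) :=
    LinearMap.pi (fun z : {x // x ∈ t} => (aeval ![(z : ℝ × ℝ).1, (z : ℝ × ℝ).2]
      : MvPolynomial (Fin 2) ℝ →ₐ[ℝ] ℝ).toLinearMap) with hE
  set Eb : (restrictTotalDegree (Fin 2) ℝ d) →ₗ[ℝ] ({x // x ∈ t} → ℝ) :=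
    E.comp (restrictTotalDegree (Fin 2) ℝ d).subtype with hEb
  -- surjectivity of the restricted evaluation map
  have hsurj : Function.Surjective Eb := by
    intro g
    set F : MvPolynomial (Fin 2) ℝ :=
      ∑ z ∈ t.attach, (g z / aeval ![(z : ℝ × ℝ).1, (z : ℝ × ℝ).2] (fz z)) • fz z with hF
    have hFmem : F ∈ restrictTotalDegree (Fin 2) ℝ d := by
      rw [mem_restrictTotalDegree]
      refine (MvPolynomial.totalDegree_finset_sum _ _).trans ?_
      refine Finset.sup_le fun z _ => ?_
      refine (MvPolynomial.totalDegree_smul_le _ _).trans ?_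
      exact (hfzdeg z).trans (by omega)
    refine ⟨⟨F, hFmem⟩, ?_⟩
    funext u
    show E F u = g u
    rw [hF, map_sum]
    rw [hE]
    simp only [LinearMap.pi_apply, Finset.sum_apply, map_smul, Pi.smul_apply,
      AlgHom.toLinearMap_apply, smul_eq_mul]
    rw [Finset.sum_eq_single_of_mem u (Finset.mem_attach t u)]
    · exact div_mul_cancel₀ _ (hfz_self u u.2)
    · intro z _ hzu
      rw [hfz_other (z : ℝ × ℝ) (u : ℝ × ℝ) u.2
        (fun h => hzu (Subtype.ext h.symm)), mul_zero]
  -- submodules generated by multiples of p and q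
  set P : Submodule ℝ (MvPolynomial (Fin 2) ℝ) :=
    Submodule.map (LinearMap.mulLeft ℝ p) (restrictTotalDegree (Fin 2) ℝ (n + s)) with hP
  set Q : Submodule ℝ (MvPolynomial (Fin 2) ℝ) :=
    Submodule.map (LinearMap.mulLeft ℝ q) (restrictTotalDegree (Fin 2) ℝ (m + s)) with hQ
  have hinjp : Function.Injective (LinearMap.mulLeft ℝ p) := fun a b hab => by
    simp only [LinearMap.mulLeft_apply] at hab
    exact mul_left_cancel₀ hp hab
  have hinjq : Function.Injective (LinearMap.mulLeft ℝ q) := fun a b hab => by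
    simp only [LinearMap.mulLeft_apply] at hab
    exact mul_left_cancel₀ hq hab
  haveI : FiniteDimensional ℝ P := Module.Finite.map _ _
  haveI : FiniteDimensional ℝ Q := Module.Finite.map _ _
  -- P ⊔ Q consists of polynomials of degree ≤ d vanishing on t
  have hPV : P ≤ restrictTotalDegree (Fin 2) ℝ d := by
    rintro f ⟨A, hA, rfl⟩
    simp only [SetLike.mem_coe] at hA
    rw [mem_restrictTotalDegree] at hA
    rw [mem_restrictTotalDegree]
    simp only [LinearMap.mulLeft_apply]
    exact (MvPolynomial.totalDegree_mul _ _).trans (by omega)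
  have hQV : Q ≤ restrictTotalDegree (Fin 2) ℝ d := by
    rintro f ⟨B, hB, rfl⟩
    simp only [SetLike.mem_coe] at hB
    rw [mem_restrictTotalDegree] at hB
    rw [mem_restrictTotalDegree]
    simp only [LinearMap.mulLeft_apply]
    exact (MvPolynomial.totalDegree_mul _ _).trans (by omega)
  have hPker : P ≤ LinearMap.ker E := by
    rintro f ⟨A, _, rfl⟩
    rw [LinearMap.mem_ker, hE]
    funext z
    simp only [LinearMap.pi_apply, AlgHom.toLinearMap_apply, LinearMap.mulLeft_apply, map_mul,
      Pi.zero_apply]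
    rw [hzp (z : ℝ × ℝ) z.2, zero_mul]
  have hQker : Q ≤ LinearMap.ker E := by
    rintro f ⟨B, _, rfl⟩
    rw [LinearMap.mem_ker, hE]
    funext z
    simp only [LinearMap.pi_apply, AlgHom.toLinearMap_apply, LinearMap.mulLeft_apply, map_mul,
      Pi.zero_apply]
    rw [hzq (z : ℝ × ℝ) z.2, zero_mul]
  -- intersection is contained in multiples of p*q
  have hPQint : P ⊓ Q ≤
      Submodule.map (LinearMap.mulLeft ℝ (p * q)) (restrictTotalDegree (Fin 2) ℝ s) := by
    rintro f ⟨hfP, hfQ⟩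
    obtain ⟨A, hA, rfl⟩ := hfP
    obtain ⟨B, hB, hBf⟩ := hfQ
    simp only [LinearMap.mulLeft_apply] at hBf ⊢
    have hdvd : q ∣ p * A := ⟨B, hBf.symm⟩
    obtain ⟨CC, rfl⟩ := hco.symm.dvd_of_dvd_mul_left hdvd
    refine ⟨CC, ?_, by rw [LinearMap.mulLeft_apply]; ring⟩
    simp only [SetLike.mem_coe] at hA ⊢
    rw [mem_restrictTotalDegree] at hA
    rw [mem_restrictTotalDegree]
    rcases eq_or_ne CC 0 with rfl | hCC
    · simp
    · rw [totalDegree_mul_eq hq hCC] at hA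
      omega
  -- rank computations
  haveI : FiniteDimensional ℝ (restrictTotalDegree (Fin 2) ℝ d) := inferInstance
  have hrankP : Module.finrank ℝ P = Nd (n + s) := by
    rw [hP, ← (Submodule.equivMapOfInjective _ hinjp _).finrank_eq,
      finrank_restrictTotalDegree]
  have hrankQ : Module.finrank ℝ Q = Nd (m + s) := by
    rw [hQ, ← (Submodule.equivMapOfInjective _ hinjq _).finrank_eq,
      finrank_restrictTotalDegree]
  have hrankInt : Module.finrank ℝ (P ⊓ Q : Submodule ℝ (MvPolynomial (Fin 2) ℝ)) ≤ Nd s := by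
    refine (Submodule.finrank_mono hPQint).trans ?_
    rw [← finrank_restrictTotalDegree s]
    exact Submodule.finrank_map_le _ _
  have hsum := Submodule.finrank_sup_add_finrank_inf_eq P Q
  -- the sup embeds into the kernel of Eb
  set U' : Submodule ℝ (restrictTotalDegree (Fin 2) ℝ d) :=
    (P ⊔ Q).comap (restrictTotalDegree (Fin 2) ℝ d).subtype with hU'
  have hU'ker : U' ≤ LinearMap.ker Eb := by
    intro x hx
    rw [hU', Submodule.mem_comap] at hx
    rw [LinearMap.mem_ker, hEb, LinearMap.comp_apply]
    exact (sup_le hPker hQker) hx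
  have hrankU' : Module.finrank ℝ U'
      = Module.finrank ℝ (P ⊔ Q : Submodule ℝ (MvPolynomial (Fin 2) ℝ)) := by
    have hmap : U'.map (restrictTotalDegree (Fin 2) ℝ d).subtype = P ⊔ Q := by
      rw [hU', Submodule.map_comap_subtype, inf_eq_right.mpr (sup_le hPV hQV)]
    rw [← hmap]
    exact (Submodule.equivMapOfInjective _ (Submodule.injective_subtype _) U').finrank_eq
  have hrankker : Module.finrank ℝ (P ⊔ Q : Submodule ℝ (MvPolynomial (Fin 2) ℝ))
      ≤ Module.finrank ℝ (LinearMap.ker Eb) := by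
    rw [← hrankU']
    exact Submodule.finrank_mono hU'ker
  -- rank-nullity for Eb
  have hrn := LinearMap.finrank_range_add_finrank_ker Eb
  have hrange : LinearMap.range Eb = ⊤ := LinearMap.range_eq_top.mpr hsurj
  rw [hrange, finrank_top, Module.finrank_fintype_fun_eq_card, Fintype.card_coe,
    finrank_restrictTotalDegree] at hrn
  -- put everything together
  have hid := Nd_identity m n s
  have hNdd : Nd d = Nd (m + n + s) := rfl
  rw [hNdd] at hrn
  omega




noncomputable def reP (h : MvPolynomial (Fin 2) ℂ) : MvPolynomial (Fin 2) ℝ :=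
  ∑ s ∈ h.support, monomial s (h.coeff s).re

noncomputable def imP (h : MvPolynomial (Fin 2) ℂ) : MvPolynomial (Fin 2) ℝ :=
  ∑ s ∈ h.support, monomial s (h.coeff s).im

theorem coeff_reP (h : MvPolynomial (Fin 2) ℂ) (s : Fin 2 →₀ ℕ) :
    (reP h).coeff s = (h.coeff s).re := by
  classical
  rw [reP, MvPolynomial.coeff_sum]
  simp only [MvPolynomial.coeff_monomial]
  rw [Finset.sum_ite_eq' h.support s (fun s' => (h.coeff s').re)]
  by_cases hmem : s ∈ h.support
  · rw [if_pos hmem]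
  · rw [if_neg hmem, MvPolynomial.notMem_support_iff.mp hmem]; simp

theorem coeff_imP (h : MvPolynomial (Fin 2) ℂ) (s : Fin 2 →₀ ℕ) :
    (imP h).coeff s = (h.coeff s).im := by
  classical
  rw [imP, MvPolynomial.coeff_sum]
  simp only [MvPolynomial.coeff_monomial]
  rw [Finset.sum_ite_eq' h.support s (fun s' => (h.coeff s').im)]
  by_cases hmem : s ∈ h.support
  · rw [if_pos hmem]
  · rw [if_neg hmem, MvPolynomial.notMem_support_iff.mp hmem]; simp

theorem h_decomp (h : MvPolynomial (Fin 2) ℂ) :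
    h = (reP h).map (algebraMap ℝ ℂ) + C Complex.I * (imP h).map (algebraMap ℝ ℂ) := by
  apply MvPolynomial.ext
  intro s
  rw [MvPolynomial.coeff_add, MvPolynomial.coeff_map, MvPolynomial.coeff_C_mul,
    MvPolynomial.coeff_map, coeff_reP, coeff_imP]
  simp only [Complex.coe_algebraMap]
  rw [mul_comm]
  exact (Complex.re_add_im _).symm

theorem totalDegree_reP_le (h : MvPolynomial (Fin 2) ℂ) :
    (reP h).totalDegree ≤ h.totalDegree := by
  apply Finset.sup_mono
  intro s hs
  rw [MvPolynomial.mem_support_iff] at hs ⊢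
  rw [coeff_reP] at hs
  exact fun hc => hs (by rw [hc]; simp)

theorem totalDegree_imP_le (h : MvPolynomial (Fin 2) ℂ) :
    (imP h).totalDegree ≤ h.totalDegree := by
  apply Finset.sup_mono
  intro s hs
  rw [MvPolynomial.mem_support_iff] at hs ⊢
  rw [coeff_imP] at hs
  exact fun hc => hs (by rw [hc]; simp)

-- evaluation compatibility
theorem eval_map_real (p : MvPolynomial (Fin 2) ℝ) (x y : ℝ) :
    eval ![(x : ℂ), (y : ℂ)] (p.map (algebraMap ℝ ℂ)) = ((aeval ![x, y] p : ℝ) : ℂ) := by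
  have hv : ![(x : ℂ), (y : ℂ)] = fun i => ((![x, y] i : ℝ) : ℂ) := by
    funext i; fin_cases i <;> simp
  rw [hv, MvPolynomial.eval_map]
  rw [MvPolynomial.aeval_def]
  induction p using MvPolynomial.induction_on with
  | C a => simp
  | add f g hf hg => simp [hf, hg]
  | mul_X f i hf => simp [hf]

theorem zero_iff (h : MvPolynomial (Fin 2) ℂ) (x y : ℝ) :
    eval ![(x : ℂ), (y : ℂ)] h = 0 ↔
      (aeval ![x, y] (reP h) = 0 ∧ aeval ![x, y] (imP h) = 0) := by
  conv_lhs => rw [h_decomp h]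
  rw [map_add, map_mul, eval_map_real, eval_map_real]
  simp only [MvPolynomial.eval_C]
  constructor
  · intro hz
    have hre := congrArg Complex.re hz
    have him := congrArg Complex.im hz
    simp at hre him
    exact ⟨hre, him⟩
  · rintro ⟨h1, h2⟩
    rw [h1, h2]
    simp


end RealZerosAux

open RealZerosAux

/-- If `h ∈ ℂ[X,Y]` is irreducible and is not a scalar multiple `μ·r` of a polynomial
`r ∈ ℝ[X,Y]` with real coefficients, then `h` has at most `deg(h)²` real zeros. -/
theorem real_zeros_of_truly_complex_irreducible_finite
    (h : MvPolynomial (Fin 2) ℂ) (hirr : Irreducible h)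
    (hnotreal : ¬ ∃ (μ : ℂ) (r : MvPolynomial (Fin 2) ℝ),
      h = C μ * r.map (algebraMap ℝ ℂ)) :
    {p : ℝ × ℝ | eval ![(p.1 : ℂ), (p.2 : ℂ)] h = 0}.Finite ∧
      {p : ℝ × ℝ | eval ![(p.1 : ℂ), (p.2 : ℂ)] h = 0}.ncard ≤ h.totalDegree ^ 2 := by
  classical
  set Z := {p : ℝ × ℝ | eval ![(p.1 : ℂ), (p.2 : ℂ)] h = 0} with hZ
  set p := reP h with hp'
  set q := imP h with hq'
  -- p ≠ 0
  have hpne : p ≠ 0 := by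
    intro hp0
    apply hnotreal
    refine ⟨Complex.I, q, ?_⟩
    rw [h_decomp h, ← hp', ← hq', hp0]
    simp
  have hqne : q ≠ 0 := by
    intro hq0
    apply hnotreal
    refine ⟨1, p, ?_⟩
    rw [h_decomp h, ← hp', ← hq', hq0]
    simp
  -- coprimality
  have hco : IsRelPrime p q := by
    intro e hep heq
    have hmapdvd : e.map (algebraMap ℝ ℂ) ∣ h := by
      rw [h_decomp h, ← hp', ← hq']
      exact dvd_add ((MvPolynomial.map (algebraMap ℝ ℂ)).map_dvd hep)
        (Dvd.dvd.mul_left ((MvPolynomial.map (algebraMap ℝ ℂ)).map_dvd heq) _)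
    obtain ⟨k, hk⟩ := hmapdvd
    rcases hirr.isUnit_or_isUnit hk with hu | hu
    · -- map e is a unit, hence e is a unit
      obtain ⟨c, hc⟩ := eq_C_of_isUnit hu
      have hecoeff : ∀ s : Fin 2 →₀ ℕ, s ≠ 0 → e.coeff s = 0 := by
        intro s hs
        have : (e.map (algebraMap ℝ ℂ)).coeff s = 0 := by
          rw [hc, MvPolynomial.coeff_C, if_neg (Ne.symm hs)]
        rw [MvPolynomial.coeff_map] at this
        have := (map_eq_zero_iff (algebraMap ℝ ℂ)
          ((algebraMap ℝ ℂ).injective)).mp this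
        exact this
      have heC : e = MvPolynomial.C (e.coeff 0) := by
        apply MvPolynomial.ext
        intro s
        by_cases hs : s = 0
        · subst hs; simp
        · rw [hecoeff s hs, MvPolynomial.coeff_C, if_neg (Ne.symm hs)]
      have hene : e ≠ 0 := fun he0 => hpne (by simpa [he0] using hep)
      have hc0 : e.coeff 0 ≠ 0 := fun hcc => hene (by rw [heC, hcc]; simp)
      rw [heC]
      exact (isUnit_iff_ne_zero.mpr hc0).map MvPolynomial.C
    · -- k is a unit, so h is a scalar multiple of a real polynomial
      exfalso
      obtain ⟨c, rfl⟩ := eq_C_of_isUnit hu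
      exact hnotreal ⟨c, e, by rw [hk]; ring⟩
  -- the key cardinality bound
  have key : ∀ t : Finset (ℝ × ℝ), ↑t ⊆ Z → t.card ≤ h.totalDegree ^ 2 := by
    intro t ht
    have h1 : ∀ z ∈ t, aeval ![z.1, z.2] p = 0 := by
      intro z hz
      exact ((zero_iff h z.1 z.2).mp (ht hz)).1
    have h2 : ∀ z ∈ t, aeval ![z.1, z.2] q = 0 := by
      intro z hz
      exact ((zero_iff h z.1 z.2).mp (ht hz)).2
    calc t.card ≤ p.totalDegree * q.totalDegree := count_le p q hpne hqne hco t h1 h2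
    _ ≤ h.totalDegree * h.totalDegree :=
        Nat.mul_le_mul (totalDegree_reP_le h) (totalDegree_imP_le h)
    _ = h.totalDegree ^ 2 := (sq _).symm
  have hfin : Z.Finite := by
    by_contra hinf
    rw [← Set.not_infinite, not_not] at hinf
    obtain ⟨t, ht, hcard⟩ := hinf.exists_subset_card_eq (h.totalDegree ^ 2 + 1)
    have := key t ht
    omega
  refine ⟨hfin, ?_⟩
  rw [Set.ncard_eq_toFinset_card Z hfin]
  exact key hfin.toFinset (by rw [Set.Finite.coe_toFinset])
end

section
/- Let F ∈ ℝ[X,Y] be a nonzero bivariate polynomial of total degree d ≥ 1 with ∂F/∂Y = 0 (so F depends only on the variable X), and let G ∈ ℝ[X,Y] be a bivariate t-sparse polynomial (t ≥ 1). If the system F(X,Y) = 0, G(X,Y) = 0 has finitely many real solutions, then it has at most d(2t − 1) real solutions. -/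
open MvPolynomial

open Polynomial in
lemma sparse_roots_aux : ∀ (t : ℕ) (p : ℝ[X]), p ≠ 0 → p.support.card ≤ t →
    p.roots.toFinset.card ≤ 2 * t - 1 := by
  intro t
  induction t with
  | zero =>
    intro p hp hcard
    exact absurd (Finset.card_eq_zero.mp (Nat.le_zero.mp hcard)) (by
      simpa [Polynomial.support_eq_empty] using hp)
  | succ t ih =>
    intro p hp hcard
    obtain ⟨q, hpq, hqdvd⟩ := p.exists_eq_pow_rootMultiplicity_mul_and_not_dvd hp 0
    rw [Polynomial.C_0, sub_zero] at hpq hqdvd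
    have hq0 : q.coeff 0 ≠ 0 := fun h => hqdvd (X_dvd_iff.mpr h)
    have hqne : q ≠ 0 := fun h => hq0 (by simp [h])
    set m := p.rootMultiplicity 0 with hm
    have hsupp : q.support.card ≤ p.support.card := by
      apply Finset.card_le_card_of_injOn (fun n => n + m)
      · intro n hn
        rw [Finset.mem_coe, Polynomial.mem_support_iff] at hn ⊢
        rwa [hpq, coeff_X_pow_mul]
      · intro a _ b _ h
        simpa using h
    have hroots : p.roots.toFinset.card ≤ q.roots.toFinset.card + 1 := by
      have hXq : (X:ℝ[X]) ^ m * q ≠ 0 := hpq ▸ hp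
      calc p.roots.toFinset.card
          = (((X:ℝ[X]) ^ m).roots + q.roots).toFinset.card := by
            rw [hpq, roots_mul hXq]
        _ ≤ (((X:ℝ[X]) ^ m).roots.toFinset ∪ q.roots.toFinset).card := by
            rw [Multiset.toFinset_add]
        _ ≤ ((X:ℝ[X]) ^ m).roots.toFinset.card + q.roots.toFinset.card :=
            Finset.card_union_le _ _
        _ ≤ 1 + q.roots.toFinset.card := by
            gcongr
            have hss : ((X:ℝ[X]) ^ m).roots.toFinset ⊆ {0} := by
              intro x hx
              rw [Multiset.mem_toFinset, roots_pow, roots_X] at hx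
              rcases Multiset.mem_nsmul.mp hx with ⟨-, hx⟩
              simpa using hx
            simpa using Finset.card_le_card hss
        _ = q.roots.toFinset.card + 1 := by omega
    by_cases hq' : derivative q = 0
    · have : q.roots = 0 := by
        rw [eq_C_of_derivative_eq_zero hq', roots_C]
      rw [this] at hroots
      simp at hroots
      omega
    · have hd_supp : (derivative q).support.card ≤ q.support.card - 1 := by
        have h0 : (0:ℕ) ∈ q.support := Polynomial.mem_support_iff.mpr hq0
        have hsub : (derivative q).support.card ≤ (q.support.erase 0).card := by
          apply Finset.card_le_card_of_injOn (fun n => n + 1)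
          · intro n hn
            rw [Finset.mem_coe, Polynomial.mem_support_iff] at hn
            rw [coeff_derivative] at hn
            have : q.coeff (n+1) ≠ 0 := fun h => hn (by simp [h])
            exact Finset.mem_erase.mpr ⟨Nat.succ_ne_zero n, Polynomial.mem_support_iff.mpr this⟩
          · intro a _ b _ h; simpa using h
        rwa [Finset.card_erase_of_mem h0] at hsub
      have hdle : (derivative q).support.card ≤ t := by omega
      have ht1 : 1 ≤ t := by
        have : (derivative q).support.Nonempty := Polynomial.support_nonempty.mpr hq'
        have := Finset.card_pos.mpr this
        omega
      have hih := ih (derivative q) hq' hdle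
      have hq_roots := q.card_roots_toFinset_le_derivative
      omega

/-- **Base case 2 of Proposition 11.** If `F ∈ ℝ[X,Y]` is nonzero of total degree
`d ≥ 1` with `∂F/∂Y = 0` (so `F` depends only on `X`), `G` is `t`-sparse (`t ≥ 1`),
and the system `F = G = 0` has finitely many real solutions, then it has at most
`d·(2t - 1)` solutions. -/
theorem card_solutions_le_of_pderivY_eq_zero
    (F G : MvPolynomial (Fin 2) ℝ) (hF : F ≠ 0)
    (d : ℕ) (hd : F.totalDegree = d) (hd1 : 1 ≤ d)
    (hFY : pderiv (1 : Fin 2) F = 0)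
    (t : ℕ) (ht : 1 ≤ t) (hG : G.support.card ≤ t)
    (hfin : {p : ℝ × ℝ | eval ![p.1, p.2] F = 0 ∧ eval ![p.1, p.2] G = 0}.Finite) :
    {p : ℝ × ℝ | eval ![p.1, p.2] F = 0 ∧ eval ![p.1, p.2] G = 0}.ncard ≤
      d * (2 * t - 1) := by
  classical
  set S := {p : ℝ × ℝ | eval ![p.1, p.2] F = 0 ∧ eval ![p.1, p.2] G = 0} with hSdef
  -- every exponent in F has zero Y-degree
  have hm1 : ∀ m ∈ F.support, m (1 : Fin 2) = 0 := by
    intro m hm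
    by_contra h1
    have hco : coeff (m - Finsupp.single 1 1) (pderiv (1 : Fin 2) F) =
        F.coeff m * (m 1 : ℝ) := by
      conv_lhs => rw [F.as_sum, map_sum, coeff_sum]
      rw [Finset.sum_eq_single m]
      · rw [pderiv_monomial, coeff_monomial, if_pos rfl]
      · intro m' hm' hne
        by_cases h0 : m' 1 = 0
        · simp [pderiv_monomial, h0]
        · have hcond : (m' - Finsupp.single 1 1) ≠ (m - Finsupp.single 1 1) := by
            intro hEq
            apply hne
            ext j
            have hj' := DFunLike.congr_fun hEq j
            rw [Finsupp.tsub_apply, Finsupp.tsub_apply, Finsupp.single_apply] at hj'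
            by_cases hj : j = (1 : Fin 2)
            · subst hj
              rw [if_pos rfl] at hj'
              omega
            · rw [if_neg (fun h => hj h.symm)] at hj'
              omega
          rw [pderiv_monomial, coeff_monomial, if_neg hcond]
      · intro h; exact absurd hm h
    rw [hFY] at hco
    simp only [coeff_zero] at hco
    rcases mul_eq_zero.mp hco.symm with h|h
    · exact (MvPolynomial.mem_support_iff.mp hm) h
    · exact h1 (Nat.cast_eq_zero.mp h)
  -- univariate polynomial in X representing F
  set f : Polynomial ℝ :=
    ∑ m ∈ F.support, Polynomial.C (F.coeff m) * Polynomial.X ^ (m 0) with hfdef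
  have hfeval : ∀ x y : ℝ, f.eval x = eval ![x, y] F := by
    intro x y
    rw [hfdef, Polynomial.eval_finset_sum, eval_eq']
    apply Finset.sum_congr rfl
    intro m hm
    rw [Fin.prod_univ_two, hm1 m hm]
    simp [Matrix.cons_val_zero, Matrix.cons_val_one]
  have hfne : f ≠ 0 := by
    obtain ⟨m₀, hm₀⟩ := support_nonempty.mpr hF
    have hcf : f.coeff (m₀ 0) = F.coeff m₀ := by
      rw [hfdef, Polynomial.finset_sum_coeff]
      rw [Finset.sum_eq_single m₀]
      · simp [Polynomial.coeff_C_mul, Polynomial.coeff_X_pow]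
      · intro m hm hne
        simp only [Polynomial.coeff_C_mul, Polynomial.coeff_X_pow, mul_ite, mul_one, mul_zero]
        rw [if_neg]
        intro hEq
        apply hne
        ext j
        by_cases hj : j = (1 : Fin 2)
        · subst hj; rw [hm1 m hm, hm1 m₀ hm₀]
        · have : j = 0 := by omega
          subst this; exact hEq.symm
      · intro h; exact absurd hm₀ h
    intro h
    rw [h, Polynomial.coeff_zero] at hcf
    exact (MvPolynomial.mem_support_iff.mp hm₀) hcf.symm
  have hfdeg : f.natDegree ≤ d := by
    rw [hfdef]
    apply Polynomial.natDegree_sum_le_of_forall_le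
    intro m hm
    refine (Polynomial.natDegree_C_mul_X_pow_le _ _).trans ?_
    have h1 := MvPolynomial.le_totalDegree hm
    have h2 : (m.sum fun _ e => e) = m 0 + m 1 := by
      rw [Finsupp.sum_fintype _ _ (fun _ => rfl), Fin.sum_univ_two]
    omega
  -- univariate polynomial in Y for G specialized at x
  set g : ℝ → Polynomial ℝ := fun x =>
    ∑ m ∈ G.support, Polynomial.C (G.coeff m * x ^ (m 0)) * Polynomial.X ^ (m 1) with hgdef
  have hgeval : ∀ x y : ℝ, (g x).eval y = eval ![x, y] G := by
    intro x y
    rw [hgdef, Polynomial.eval_finset_sum, eval_eq']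
    apply Finset.sum_congr rfl
    intro m hm
    rw [Fin.prod_univ_two]
    simp [mul_assoc]
  have hgsupp : ∀ x : ℝ, (g x).support.card ≤ t := by
    intro x
    have hsub : (g x).support ⊆ G.support.image (fun m => m 1) := by
      intro n hn
      rw [Polynomial.mem_support_iff, hgdef, Polynomial.finset_sum_coeff] at hn
      obtain ⟨m, hm, hne⟩ := Finset.exists_ne_zero_of_sum_ne_zero hn
      simp only [Polynomial.coeff_C_mul, Polynomial.coeff_X_pow, mul_ite, mul_one,
        mul_zero, ne_eq, ite_eq_right_iff, not_forall] at hne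
      exact Finset.mem_image.mpr ⟨m, hm, hne.1.symm⟩
    calc (g x).support.card ≤ (G.support.image (fun m => m 1)).card :=
          Finset.card_le_card hsub
      _ ≤ G.support.card := Finset.card_image_le
      _ ≤ t := hG
  -- the x-coordinates of solutions are roots of f
  set R : Finset ℝ := f.roots.toFinset with hRdef
  have hRcard : R.card ≤ d :=
    (Multiset.toFinset_card_le _).trans ((Polynomial.card_roots' f).trans hfdeg)
  have hgne : ∀ x ∈ R, g x ≠ 0 := by
    intro x hx hgx
    have hxr : f.eval x = 0 := by
      rw [hRdef, Multiset.mem_toFinset, Polynomial.mem_roots hfne] at hx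
      exact hx
    have : S.Infinite := by
      refine Set.infinite_of_injective_forall_mem
        (f := fun y : ℝ => ((x, y) : ℝ × ℝ))
        (fun a b h => ((Prod.mk.injEq _ _ _ _).mp h).2) (fun y => ?_)
      refine ⟨?_, ?_⟩
      · show eval ![x, y] F = 0
        rw [← hfeval x y]; exact hxr
      · show eval ![x, y] G = 0
        rw [← hgeval, hgx, Polynomial.eval_zero]
    exact this hfin
  -- bound via a biUnion finset
  set B : Finset (ℝ × ℝ) :=
    R.biUnion (fun x => (g x).roots.toFinset.image (fun y => (x, y))) with hBdef
  have hSB : S ⊆ ↑B := by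
    rintro ⟨x, y⟩ ⟨h1, h2⟩
    have hxR : x ∈ R := by
      rw [hRdef, Multiset.mem_toFinset, Polynomial.mem_roots hfne]
      show f.eval x = 0
      rw [hfeval x y]; exact h1
    have hyg : y ∈ (g x).roots.toFinset := by
      rw [Multiset.mem_toFinset, Polynomial.mem_roots (hgne x hxR)]
      show (g x).eval y = 0
      rw [hgeval x y]; exact h2
    exact Finset.mem_coe.mpr (Finset.mem_biUnion.mpr
      ⟨x, hxR, Finset.mem_image.mpr ⟨y, hyg, rfl⟩⟩)
  calc S.ncard ≤ (↑B : Set (ℝ × ℝ)).ncard :=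
        Set.ncard_le_ncard hSB B.finite_toSet
    _ = B.card := Set.ncard_coe_finset B
    _ ≤ ∑ x ∈ R, ((g x).roots.toFinset.image (fun y => (x, y))).card :=
        Finset.card_biUnion_le
    _ ≤ ∑ _x ∈ R, (2 * t - 1) := by
        apply Finset.sum_le_sum
        intro x hx
        exact Finset.card_image_le.trans (sparse_roots_aux t (g x) (hgne x hx) (hgsupp x))
    _ = R.card * (2 * t - 1) := by rw [Finset.sum_const, smul_eq_mul]
    _ ≤ d * (2 * t - 1) := Nat.mul_le_mul_right _ hRcard
end
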